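/- arXiv:0710.0939 — 5 statements merged into one kernel-verified Lean document; each statement's English description precedes it below -/
import Mathlib

section
/- Let d ≥ 1, let η ∈ X be a sandpile configuration on ℤ^d, and let T and T' be two legal toppling procedures which are both finite for η. If T is stabilizing for η, then T'(∞, x, η) ≤ T(∞, x, η) for every x ∈ ℤ^d. -/
open MeasureTheory Filter Topology
open scoped ENNReal NNReal

/-- Sites of the lattice `ℤ^d`. -/
abbrev Site (d : ℕ) := Fin d → ℤ

/-- Sandpile configurations: `X = ℕ^{ℤ^d}`. -/
abbrev Config (d : ℕ) := Site d → ℕ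

/-- Nearest-neighbor adjacency on `ℤ^d` (`ℓ¹`-distance one). -/
def Adjacent {d : ℕ} (x y : Site d) : Prop :=
  (∑ i, (x i - y i).natAbs) = 1

/-- Sum of the values of `f` over the `2d` nearest neighbors of `y`. -/
def nbrSum {d : ℕ} {M : Type*} [AddCommMonoid M] (f : Site d → M) (y : Site d) : M :=
  ∑ i : Fin d, (f (Function.update y i (y i + 1)) + f (Function.update y i (y i - 1)))

/-- The left limit `T(t-, x, η)` of a (monotone, `ℕ`-valued) toppling function. -/
noncomputable def leftVal {d : ℕ} (T : NNReal → Site d → Config d → ℕ)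
    (t : NNReal) (x : Site d) (η : Config d) : ℕ :=
  sSup ((fun s => T s x η) '' Set.Iio t)

/-- A toppling procedure on `ℤ^d` (Definition 2.1): a measurable map
`T : [0,∞) × ℤ^d × X → ℕ` such that (a) `T(0,x,η) = 0`; (b) `t ↦ T(t,x,η)` is
right-continuous, nondecreasing, with jumps of size at most one; (c) finitely many
jumps in every finite time interval; (d) no infinite backward chain of topplings. -/
structure TopplingProcedure (d : ℕ) where
  T : NNReal → Site d → Config d → ℕ
  measurable : ∀ x : Site d, Measurable fun p : NNReal × Config d => T p.1 x p.2
  init : ∀ (x : Site d) (η : Config d), T 0 x η = 0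
  mono : ∀ (x : Site d) (η : Config d), Monotone fun t => T t x η
  jumpLe : ∀ (x : Site d) (η : Config d) (t : NNReal), T t x η ≤ leftVal T t x η + 1
  rightCont : ∀ (x : Site d) (η : Config d) (t : NNReal),
    ∃ ε : NNReal, 0 < ε ∧ ∀ s, t ≤ s → s < t + ε → T s x η = T t x η
  finJumps : ∀ (x : Site d) (η : Config d) (b : NNReal),
    {t : NNReal | t ≤ b ∧ leftVal T t x η < T t x η}.Finite
  noBackwardChain : ∀ η : Config d, ¬ ∃ (xs : ℕ → Site d) (ts : ℕ → NNReal),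
    (∀ i, Adjacent (xs (i + 1)) (xs i)) ∧ StrictAnti ts ∧
    (∀ i, leftVal T (ts i) (xs i) η < T (ts i) (xs i) η)

namespace TopplingProcedure

variable {d : ℕ}

/-- The configuration `η_t = η − Δ T(t,·,η)` at time `t` (as a `ℤ`-valued function). -/
def configAt (P : TopplingProcedure d) (η : Config d) (t : NNReal) (y : Site d) : ℤ :=
  (η y : ℤ) + nbrSum (fun x => (P.T t x η : ℤ)) y - 2 * d * (P.T t y η : ℤ)

/-- The configuration `η_{t-}` just before time `t`. -/
noncomputable def configLeft (P : TopplingProcedure d) (η : Config d) (t : NNReal)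
    (y : Site d) : ℤ :=
  (η y : ℤ) + nbrSum (fun x => (leftVal P.T t x η : ℤ)) y - 2 * d * (leftVal P.T t y η : ℤ)

/-- Site `x` topples at time `t` if `T(t,x,η) > T(t-,x,η)`. -/
def TopplesAt (P : TopplingProcedure d) (η : Config d) (x : Site d) (t : NNReal) : Prop :=
  leftVal P.T t x η < P.T t x η

/-- A toppling procedure is legal if only unstable sites are toppled:
whenever `x` topples at time `t > 0`, `η_{t-}(x) ≥ 2d`. -/
def Legal (P : TopplingProcedure d) : Prop :=
  ∀ (η : Config d) (t : NNReal) (x : Site d), 0 < t → P.TopplesAt η x t →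
    (2 * d : ℤ) ≤ P.configLeft η t x

/-- `T` is finite for `η` if `T(∞,x,η) = sup_t T(t,x,η) < ∞` for every `x`. -/
def FiniteFor (P : TopplingProcedure d) (η : Config d) : Prop :=
  ∀ x : Site d, BddAbove (Set.range fun t => P.T t x η)

/-- `T(∞,x,η) = sup_{t ≥ 0} T(t,x,η)`. -/
noncomputable def Tinf (P : TopplingProcedure d) (η : Config d) (x : Site d) : ℕ :=
  sSup (Set.range fun t => P.T t x η)

/-- The limit configuration `η_∞ = η − Δ T(∞,·,η)` (as a `ℤ`-valued function). -/
noncomputable def finalConfig (P : TopplingProcedure d) (η : Config d) (y : Site d) : ℤ :=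
  (η y : ℤ) + nbrSum (fun x => (P.Tinf η x : ℤ)) y - 2 * d * (P.Tinf η y : ℤ)

/-- `T` is stabilizing for `η` if it is finite for `η` and the limit configuration
`η_∞` is stable, i.e. takes values in `{0, 1, …, 2d−1}`. -/
def StabilizingFor (P : TopplingProcedure d) (η : Config d) : Prop :=
  P.FiniteFor η ∧ ∀ y : Site d, 0 ≤ P.finalConfig η y ∧ P.finalConfig η y ≤ 2 * d - 1

end TopplingProcedure

/-- A configuration `η` is stabilizable if there exists a stabilizing legal
toppling procedure for `η`. -/
def Stabilizable {d : ℕ} (η : Config d) : Prop :=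
  ∃ P : TopplingProcedure d, P.Legal ∧ P.StabilizingFor η

/-- The shift of a configuration by a lattice vector `v`. -/
def shiftConfig {d : ℕ} (v : Site d) (η : Config d) : Config d := fun x => η (x + v)

/-- A probability measure on `X` is translation invariant if it is invariant
under all shifts of `ℤ^d`. -/
def TransInvariant {d : ℕ} (μ : Measure (Config d)) : Prop :=
  ∀ v : Site d, Measure.map (shiftConfig v) μ = μ

/-- `μ` is a product measure: under `μ` the coordinates `(η(x))` are i.i.d. -/
def IsProductMeasure {d : ℕ} (μ : Measure (Config d)) : Prop :=
  ProbabilityTheory.iIndepFun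
      (fun (x : Site d) (η : Config d) => η x) μ ∧
    ∀ x : Site d, Measure.map (fun η : Config d => η x) μ
      = Measure.map (fun η : Config d => η (0 : Site d)) μ

/-- `x` belongs to the set `T_∞` of sites that topple during stabilization of `η`. -/
def ToppledInf {d : ℕ} (η : Config d) (x : Site d) : Prop :=
  ∃ P : TopplingProcedure d, P.Legal ∧ P.StabilizingFor η ∧ 0 < P.Tinf η x

/-- `x` belongs to `W_∞ = T_∞ ∪ {x : η_∞(x) > 0}`: `x` topples during stabilization
of `η`, or is nonempty after stabilization. -/
def InWinf {d : ℕ} (η : Config d) (x : Site d) : Prop :=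
  ∃ P : TopplingProcedure d, P.Legal ∧ P.StabilizingFor η ∧
    (0 < P.Tinf η x ∨ 0 < P.finalConfig η x)

/-- `y` lies in the cluster of `x` of the set `S`: `x` and `y` are joined by a
nearest-neighbor path inside `S`. -/
def InClusterOf {d : ℕ} (S : Site d → Prop) (x y : Site d) : Prop :=
  ∃ (k : ℕ) (f : ℕ → Site d), f 0 = x ∧ f k = y ∧ (∀ i ≤ k, S (f i)) ∧
    ∀ i < k, Adjacent (f i) (f (i + 1))


section Aux

variable {d : ℕ}

lemma adj_update_add (y : Site d) (i : Fin d) :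
    Adjacent (Function.update y i (y i + 1)) y := by
  unfold Adjacent
  rw [Finset.sum_eq_single i]
  · simp
  · intro j _ hj; simp [Function.update_of_ne hj]
  · simp

lemma adj_update_sub (y : Site d) (i : Fin d) :
    Adjacent (Function.update y i (y i - 1)) y := by
  unfold Adjacent
  rw [Finset.sum_eq_single i]
  · simp
  · intro j _ hj; simp [Function.update_of_ne hj]
  · simp

lemma exists_jump (P : TopplingProcedure d) (η : Config d) {y : Site d} {s : NNReal} {n : ℕ}
    (h : n < P.T s y η) :
    ∃ t', 0 < t' ∧ t' ≤ s ∧ P.TopplesAt η y t' ∧ n < P.T t' y η := by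
  set c := P.T s y η with hc
  set A : Set NNReal := {u | c ≤ P.T u y η} with hA
  have hsA : s ∈ A := by
    rw [hA]; exact Set.mem_setOf_eq ▸ le_rfl
  have hne : A.Nonempty := ⟨s, hsA⟩
  set t' := sInf A with ht'
  have hbd : BddBelow A := OrderBot.bddBelow A
  have ht's : t' ≤ s := csInf_le hbd hsA
  have htA : c ≤ P.T t' y η := by
    obtain ⟨ε, hε, hconst⟩ := P.rightCont y η t'
    have hlt : sInf A < t' + ε := by
      rw [← ht']; exact lt_add_of_pos_right _ hε
    obtain ⟨u, huA, hu⟩ := exists_lt_of_csInf_lt hne hlt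
    have h1 : t' ≤ u := csInf_le hbd huA
    have h2 := hconst u h1 hu
    rw [← h2]; exact huA
  have hpos : 0 < t' := by
    rcases (zero_le : (0:NNReal) ≤ t').eq_or_lt with h0 | h0
    · exfalso
      have h3 := htA
      rw [← h0, P.init y η] at h3
      omega
    · exact h0
  have hlt : leftVal P.T t' y η < P.T t' y η := by
    have hub : leftVal P.T t' y η ≤ c - 1 := by
      apply csSup_le'
      rintro a ⟨u, hu, rfl⟩
      have hnotA : u ∉ A := notMem_of_lt_csInf hu hbd
      have hlt2 : P.T u y η < c := lt_of_not_ge hnotA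
      show P.T u y η ≤ c - 1
      omega
    omega
  exact ⟨t', hpos, ht's, hlt, lt_of_lt_of_le h htA⟩

lemma bad_step (hd : 1 ≤ d) (η : Config d) (T T' : TopplingProcedure d)
    (hT' : T'.Legal) (hfin' : T'.FiniteFor η)
    (hstab : T.StabilizingFor η) {y : Site d} {t : NNReal}
    (htop : T'.TopplesAt η y t) (hbad : T.Tinf η y < T'.T t y η) :
    ∃ z t', Adjacent z y ∧ t' < t ∧ T'.TopplesAt η z t' ∧ T.Tinf η z < T'.T t' z η := by
  have ht0 : 0 < t := by
    rcases (zero_le : (0:NNReal) ≤ t).eq_or_lt with h0 | h0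
    · exfalso
      have h1 := htop
      unfold TopplingProcedure.TopplesAt at h1
      rw [← h0, T'.init] at h1
      omega
    · exact h0
  have hleg := hT' η t y ht0 htop
  have hjump := T'.jumpLe y η t
  have hLy : T.Tinf η y ≤ leftVal T'.T t y η := by omega
  have hst := (hstab.2 y).2
  have key : ∃ i : Fin d,
      T.Tinf η (Function.update y i (y i + 1)) < leftVal T'.T t (Function.update y i (y i + 1)) η ∨
      T.Tinf η (Function.update y i (y i - 1)) < leftVal T'.T t (Function.update y i (y i - 1)) η := by
    by_contra hcon
    push_neg at hcon
    have hsum : nbrSum (fun x => (leftVal T'.T t x η : ℤ)) y ≤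
        nbrSum (fun x => (T.Tinf η x : ℤ)) y := by
      unfold nbrSum
      apply Finset.sum_le_sum
      intro i _
      have h1 : ((leftVal T'.T t (Function.update y i (y i + 1)) η : ℤ)) ≤
          (T.Tinf η (Function.update y i (y i + 1)) : ℤ) := by exact_mod_cast (hcon i).1
      have h2 : ((leftVal T'.T t (Function.update y i (y i - 1)) η : ℤ)) ≤
          (T.Tinf η (Function.update y i (y i - 1)) : ℤ) := by exact_mod_cast (hcon i).2
      exact add_le_add h1 h2
    unfold TopplingProcedure.configLeft at hleg
    unfold TopplingProcedure.finalConfig at hst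
    have hLy' : (T.Tinf η y : ℤ) ≤ (leftVal T'.T t y η : ℤ) := by exact_mod_cast hLy
    have hmul : 2 * (d : ℤ) * (T.Tinf η y : ℤ) ≤ 2 * (d : ℤ) * (leftVal T'.T t y η : ℤ) :=
      mul_le_mul_of_nonneg_left hLy' (by positivity)
    linarith
  have extract : ∀ z : Site d, T.Tinf η z < leftVal T'.T t z η →
      ∃ t', t' < t ∧ T'.TopplesAt η z t' ∧ T.Tinf η z < T'.T t' z η := by
    intro z hz
    unfold leftVal at hz
    have hbdd : BddAbove ((fun s => T'.T s z η) '' Set.Iio t) := by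
      obtain ⟨b, hb⟩ := hfin' z
      exact ⟨b, fun a ⟨u, _, he⟩ => he ▸ hb ⟨u, rfl⟩⟩
    have hne : ((fun s => T'.T s z η) '' Set.Iio t).Nonempty := by
      by_contra hemp
      rw [Set.not_nonempty_iff_eq_empty] at hemp
      rw [hemp, csSup_empty] at hz
      simp at hz
    obtain ⟨u, hu, he⟩ := Nat.sSup_mem hne hbdd
    have hz' : T.Tinf η z < T'.T u z η := by rw [← he] at hz; exact hz
    obtain ⟨t'', h0, hts, htop', hval⟩ := exists_jump T' η hz'
    exact ⟨t'', lt_of_le_of_lt hts hu, htop', hval⟩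
  obtain ⟨i, hi | hi⟩ := key
  · obtain ⟨t', h1, h2, h3⟩ := extract _ hi
    exact ⟨_, t', adj_update_add y i, h1, h2, h3⟩
  · obtain ⟨t', h1, h2, h3⟩ := extract _ hi
    exact ⟨_, t', adj_update_sub y i, h1, h2, h3⟩

end Aux

/-- Theorem 2.8(1): if `T, T'` are legal toppling procedures, both finite for `η`,
and `T` is stabilizing for `η`, then `T'(∞,x,η) ≤ T(∞,x,η)` for every site `x`. -/
theorem statement0 (d : ℕ) (hd : 1 ≤ d) (η : Config d)
    (T T' : TopplingProcedure d) (hT : T.Legal) (hT' : T'.Legal)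
    (hfin : T.FiniteFor η) (hfin' : T'.FiniteFor η)
    (hstab : T.StabilizingFor η) :
    ∀ x : Site d, T'.Tinf η x ≤ T.Tinf η x := by
  intro x
  by_contra hcon
  push_neg at hcon
  obtain ⟨s, hs⟩ := Nat.sSup_mem (Set.range_nonempty (fun t => T'.T t x η)) (hfin' x)
  have hbad0 : T.Tinf η x < T'.T s x η := by
    unfold TopplingProcedure.Tinf at hcon
    rw [← hs] at hcon
    exact hcon
  obtain ⟨t0, _, _, htop0, hval0⟩ := exists_jump T' η hbad0
  set Q := {p : Site d × NNReal // T'.TopplesAt η p.1 p.2 ∧ T.Tinf η p.1 < T'.T p.2 p.1 η}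
    with hQ
  have step' : ∀ q : Q, ∃ q' : Q, Adjacent q'.1.1 q.1.1 ∧ q'.1.2 < q.1.2 := by
    rintro ⟨⟨y, t⟩, h1, h2⟩
    obtain ⟨z, t', ha, hlt, h3, h4⟩ := bad_step hd η T T' hT' hfin' hstab h1 h2
    exact ⟨⟨(z, t'), h3, h4⟩, ha, hlt⟩
  choose next hadj hlt using step'
  let f : ℕ → Q := fun n => next^[n] ⟨(x, t0), htop0, hval0⟩
  apply T'.noBackwardChain η
  refine ⟨fun i => (f i).1.1, fun i => (f i).1.2, ?_, ?_, ?_⟩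
  · intro i
    have hit : f (i + 1) = next (f i) := Function.iterate_succ_apply' next i _
    show Adjacent (f (i + 1)).1.1 (f i).1.1
    rw [hit]; exact hadj (f i)
  · apply strictAnti_nat_of_succ_lt
    intro i
    have hit : f (i + 1) = next (f i) := Function.iterate_succ_apply' next i _
    show (f (i + 1)).1.2 < (f i).1.2
    rw [hit]; exact hlt (f i)
  · intro i; exact (f i).2.1
end

section
/- Let d ≥ 1 and let η ∈ X be a sandpile configuration on ℤ^d. If T and T' are two stabilizing legal toppling procedures for η, then T'(∞, x, η) = T(∞, x, η) for all x ∈ ℤ^d; in particular, for stabilizable η the limit configuration η_∞ = η − Δ T(∞,·,η) does not depend on the choice of stabilizing legal toppling procedure. -/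
open MeasureTheory Filter Topology
open scoped ENNReal NNReal

section Aux

variable {d : ℕ}

lemma adjacent_update (y : Site d) (j : Fin d) (v : ℤ) (hv : (v - y j).natAbs = 1) :
    Adjacent (Function.update y j v) y := by
  unfold Adjacent
  rw [Fintype.sum_eq_single j]
  · simp [hv]
  · intro i hi
    simp [Function.update_of_ne hi]

lemma nbrSum_mono (f g : Site d → ℤ) (y : Site d)
    (h : ∀ z, Adjacent z y → f z ≤ g z) : nbrSum f y ≤ nbrSum g y := by
  refine Finset.sum_le_sum fun i _ => add_le_add ?_ ?_
  · exact h _ (adjacent_update y i _ (by simp))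
  · exact h _ (adjacent_update y i _ (by omega))

lemma leftVal_le (P : TopplingProcedure d) (η : Config d) (x : Site d) (t : NNReal) (N : ℕ)
    (h : ∀ s, s < t → P.T s x η ≤ N) : leftVal P.T t x η ≤ N := by
  rw [leftVal]
  rcases Set.eq_empty_or_nonempty ((fun s => P.T s x η) '' Set.Iio t) with he | hne
  · rw [he]
    simp
  · exact csSup_le hne (by rintro _ ⟨s, hs, rfl⟩; exact h s hs)

lemma firstExceed (P : TopplingProcedure d) (η : Config d) (x : Site d) (N : ℕ) (s : NNReal)
    (h : N < P.T s x η) :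
    ∃ t, t ≤ s ∧ 0 < t ∧ (∀ u, u < t → P.T u x η ≤ N) ∧ N < P.T t x η := by
  set S : Set NNReal := {u | N < P.T u x η} with hSdef
  have hS : S.Nonempty := ⟨s, h⟩
  set t := sInf S with ht
  have hts : t ≤ s := csInf_le (OrderBot.bddBelow S) h
  have hlt : ∀ u, u < t → P.T u x η ≤ N := by
    intro u hu
    by_contra hc
    exact absurd (csInf_le (OrderBot.bddBelow S) (not_le.mp hc)) (not_le.mpr hu)
  have htS : N < P.T t x η := by
    obtain ⟨ε, hε, hconst⟩ := P.rightCont x η t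
    obtain ⟨u, huS, hu⟩ := exists_lt_of_csInf_lt hS (lt_add_of_pos_right t hε)
    have htu : t ≤ u := csInf_le (OrderBot.bddBelow S) huS
    have heq := hconst u htu hu
    rw [← heq]
    exact huS
  have hpos : 0 < t := by
    by_contra h0
    have h0' : t = 0 := le_antisymm (not_lt.mp h0) zero_le
    rw [h0', P.init] at htS
    omega
  exact ⟨t, hts, hpos, hlt, htS⟩

/-- A "first exceeding" toppling event of `T'` relative to the total topplings of `T`. -/
def FE (T T' : TopplingProcedure d) (η : Config d) (x : Site d) (t : NNReal) : Prop :=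
  0 < t ∧ (∀ s, s < t → T'.T s x η ≤ T.Tinf η x) ∧ T.Tinf η x < T'.T t x η

lemma FE_leftVal {T T' : TopplingProcedure d} {η : Config d} {x : Site d} {t : NNReal}
    (h : FE T T' η x t) : leftVal T'.T t x η = T.Tinf η x := by
  refine le_antisymm (leftVal_le T' η x t _ h.2.1) ?_
  have h1 := T'.jumpLe x η t
  have h2 := h.2.2
  omega

lemma FE_topples {T T' : TopplingProcedure d} {η : Config d} {x : Site d} {t : NNReal}
    (h : FE T T' η x t) : T'.TopplesAt η x t := by
  rw [TopplingProcedure.TopplesAt, FE_leftVal h]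
  exact h.2.2

lemma key (T T' : TopplingProcedure d) (η : Config d) (hT' : T'.Legal)
    (hfin' : T'.FiniteFor η) (hstab : T.StabilizingFor η) :
    ∀ (x : Site d) (s : NNReal), T'.T s x η ≤ T.Tinf η x := by
  by_contra hcon
  push_neg at hcon
  obtain ⟨x0, s0, h0⟩ := hcon
  obtain ⟨t0, -, ht0pos, ht0min, ht0⟩ := firstExceed T' η x0 _ s0 h0
  have hFE0 : FE T T' η x0 t0 := ⟨ht0pos, ht0min, ht0⟩
  by_cases hgood : ∃ x t, FE T T' η x t ∧
      ∀ z, Adjacent z x → leftVal T'.T t z η ≤ T.Tinf η z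
  · obtain ⟨x, t, hfe, hnb⟩ := hgood
    have hleg := hT' η t x hfe.1 (FE_topples hfe)
    rw [TopplingProcedure.configLeft, FE_leftVal hfe] at hleg
    have hmono : nbrSum (fun z => (leftVal T'.T t z η : ℤ)) x ≤
        nbrSum (fun z => (T.Tinf η z : ℤ)) x :=
      nbrSum_mono _ _ _ fun z hz => by exact_mod_cast hnb z hz
    have hfin := (hstab.2 x).2
    have h2 : (2 * d : ℤ) ≤ T.finalConfig η x := by
      rw [TopplingProcedure.finalConfig]
      calc (2 * d : ℤ) ≤ (η x : ℤ) + nbrSum (fun z => (leftVal T'.T t z η : ℤ)) x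
            - 2 * d * (T.Tinf η x : ℤ) := hleg
        _ ≤ (η x : ℤ) + nbrSum (fun z => (T.Tinf η z : ℤ)) x
            - 2 * d * (T.Tinf η x : ℤ) := by linarith
    linarith
  · push_neg at hgood
    have hstep : ∀ x t, FE T T' η x t →
        ∃ y s, Adjacent y x ∧ s < t ∧ FE T T' η y s := by
      intro x t hfe
      obtain ⟨z, hadj, hlt⟩ := hgood x t hfe
      rw [leftVal] at hlt
      have hne : ((fun s => T'.T s z η) '' Set.Iio t).Nonempty := by
        by_contra hne
        rw [Set.not_nonempty_iff_eq_empty] at hne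
        rw [hne] at hlt
        simp at hlt
      obtain ⟨a, ⟨u, hu, rfl⟩, ha⟩ := exists_lt_of_lt_csSup hne hlt
      obtain ⟨t1, ht1u, hpos, hmin, hgt⟩ := firstExceed T' η z _ u ha
      exact ⟨z, t1, hadj, lt_of_le_of_lt ht1u hu, hpos, hmin, hgt⟩
    have hchain : ∃ (xs : ℕ → Site d) (ts : ℕ → NNReal),
        (∀ i, Adjacent (xs (i + 1)) (xs i)) ∧ StrictAnti ts ∧
        (∀ i, leftVal T'.T (ts i) (xs i) η < T'.T (ts i) (xs i) η) := by
      have hQ : ∀ q : {p : Site d × NNReal // FE T T' η p.1 p.2},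
          ∃ q' : {p : Site d × NNReal // FE T T' η p.1 p.2},
            Adjacent q'.1.1 q.1.1 ∧ q'.1.2 < q.1.2 := by
        rintro ⟨⟨x, t⟩, hfe⟩
        obtain ⟨y, s, h1, h2, h3⟩ := hstep x t hfe
        exact ⟨⟨(y, s), h3⟩, h1, h2⟩
      choose nxt hadj hdec using hQ
      set f : ℕ → {p : Site d × NNReal // FE T T' η p.1 p.2} :=
        fun n => nxt^[n] ⟨(x0, t0), hFE0⟩ with hf
      have hsucc : ∀ n, f (n + 1) = nxt (f n) := fun n =>
        Function.iterate_succ_apply' nxt n _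
      refine ⟨fun n => (f n).1.1, fun n => (f n).1.2, ?_, ?_, ?_⟩
      · intro i
        show Adjacent (f (i + 1)).1.1 (f i).1.1
        rw [hsucc i]
        exact hadj (f i)
      · apply strictAnti_nat_of_succ_lt
        intro n
        show (f (n + 1)).1.2 < (f n).1.2
        rw [hsucc n]
        exact hdec (f n)
      · intro i
        exact FE_topples (f i).2
    obtain ⟨xs, ts, h1, h2, h3⟩ := hchain
    exact T'.noBackwardChain η ⟨xs, ts, h1, h2, h3⟩

lemma tinf_le (T T' : TopplingProcedure d) (η : Config d) (hT' : T'.Legal)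
    (hfin' : T'.FiniteFor η) (hstab : T.StabilizingFor η) (x : Site d) :
    T'.Tinf η x ≤ T.Tinf η x :=
  csSup_le (Set.range_nonempty _)
    (by rintro _ ⟨s, rfl⟩; exact key T T' η hT' hfin' hstab x s)

end Aux

/-- Theorem 2.8(2): two stabilizing legal toppling procedures for `η` have the same
toppling numbers `T(∞,x,η)`; in particular the limit configuration `η_∞` is well
defined. -/
theorem statement1 (d : ℕ) (hd : 1 ≤ d) (η : Config d)
    (T T' : TopplingProcedure d) (hT : T.Legal) (hT' : T'.Legal)
    (hstab : T.StabilizingFor η) (hstab' : T'.StabilizingFor η) :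
    (∀ x : Site d, T'.Tinf η x = T.Tinf η x) ∧
      ∀ y : Site d, T'.finalConfig η y = T.finalConfig η y := by
  have heq : ∀ x : Site d, T'.Tinf η x = T.Tinf η x := fun x =>
    le_antisymm (tinf_le T T' η hT' hstab'.1 hstab x)
      (tinf_le T' T η hT hstab.1 hstab' x)
  refine ⟨heq, fun y => ?_⟩
  simp only [TopplingProcedure.finalConfig, heq]
end

section
/- Let d ≥ 1, let η ∈ X be a sandpile configuration on ℤ^d, and let T be a stabilizing legal toppling procedure for η. Then there is at least one site x ∈ ℤ^d that never topples, i.e., T(∞, x, η) = 0. -/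
open MeasureTheory Filter Topology
open scoped ENNReal NNReal

section AuxChain

namespace TopplingProcedure

variable {d : ℕ} (P : TopplingProcedure d) (η : Config d)

/-- The last time the toppling count of `x` reaches its final value. -/
noncomputable def lastT (x : Site d) : NNReal := sInf {t | P.T t x η = P.Tinf η x}

lemma le_tinf (hfin : P.FiniteFor η) (t : NNReal) (x : Site d) :
    P.T t x η ≤ P.Tinf η x :=
  le_csSup (hfin x) ⟨t, rfl⟩

lemma tinf_mem (hfin : P.FiniteFor η) (x : Site d) :
    ∃ t, P.T t x η = P.Tinf η x :=
  Nat.sSup_mem (Set.range_nonempty (fun t => P.T t x η)) (hfin x)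

lemma T_lastT (hfin : P.FiniteFor η) (x : Site d) :
    P.T (P.lastT η x) x η = P.Tinf η x := by
  have hne : {t | P.T t x η = P.Tinf η x}.Nonempty := P.tinf_mem η hfin x
  obtain ⟨ε, hε, hc⟩ := P.rightCont x η (P.lastT η x)
  obtain ⟨s, hs, hslt⟩ := exists_lt_of_csInf_lt hne (lt_add_of_pos_right _ hε)
  have h1 : P.lastT η x ≤ s := csInf_le (OrderBot.bddBelow _) hs
  rw [← hc s h1 hslt]; exact hs

lemma lastT_le (x : Site d) {t : NNReal} (h : P.T t x η = P.Tinf η x) :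
    P.lastT η x ≤ t :=
  csInf_le (OrderBot.bddBelow _) h

lemma lastT_pos (hfin : P.FiniteFor η) {x : Site d} (h1 : 1 ≤ P.Tinf η x) :
    0 < P.lastT η x := by
  by_contra h0
  push_neg at h0
  have h0' : P.lastT η x = 0 := le_antisymm h0 zero_le
  have := P.T_lastT η hfin x
  rw [h0', P.init] at this
  omega

lemma leftVal_le_tinf (hfin : P.FiniteFor η) (t : NNReal) (x : Site d) :
    leftVal P.T t x η ≤ P.Tinf η x := by
  rcases Set.eq_empty_or_nonempty ((fun s => P.T s x η) '' Set.Iio t) with h | h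
  · unfold leftVal; rw [h, csSup_empty]; exact Nat.zero_le _
  · refine csSup_le h ?_
    rintro a ⟨s, -, rfl⟩
    exact P.le_tinf η hfin s x

lemma topplesAt_lastT (hfin : P.FiniteFor η) {x : Site d} (h1 : 1 ≤ P.Tinf η x) :
    P.TopplesAt η x (P.lastT η x) := by
  unfold TopplesAt
  rw [P.T_lastT η hfin x]
  have hb : ∀ a ∈ (fun s => P.T s x η) '' Set.Iio (P.lastT η x), a ≤ P.Tinf η x - 1 := by
    rintro a ⟨s, hs, rfl⟩
    have h2 : P.T s x η ≠ P.Tinf η x := fun h =>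
      absurd (P.lastT_le η x h) (not_le.mpr hs)
    have h3 := P.le_tinf η hfin s x
    dsimp only
    omega
  rcases Set.eq_empty_or_nonempty ((fun s => P.T s x η) '' Set.Iio (P.lastT η x)) with h | h
  · unfold leftVal; rw [h, csSup_empty]
    exact h1
  · have := csSup_le h hb
    unfold leftVal
    omega

lemma leftVal_lastT (hfin : P.FiniteFor η) {x : Site d} (h1 : 1 ≤ P.Tinf η x) :
    leftVal P.T (P.lastT η x) x η + 1 = P.Tinf η x := by
  have h2 := P.jumpLe x η (P.lastT η x)
  have h3 := P.topplesAt_lastT η hfin h1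
  unfold TopplesAt at h3
  rw [P.T_lastT η hfin x] at h2 h3
  omega

lemma exists_nbr (hL : P.Legal) (hstab : P.StabilizingFor η)
    (hall : ∀ z : Site d, 1 ≤ P.Tinf η z) (x : Site d) :
    ∃ y : Site d, Adjacent y x ∧ P.lastT η y < P.lastT η x := by
  obtain ⟨hfin, hst⟩ := hstab
  set t := P.lastT η x with ht
  have htp := P.topplesAt_lastT η hfin (hall x)
  have ht0 : 0 < t := P.lastT_pos η hfin (hall x)
  have hLx := hL η t x ht0 htp
  have hSx := (hst x).2
  have hlv := P.leftVal_lastT η hfin (hall x)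
  -- find a neighbor y with Tinf y ≤ leftVal t y
  have hnbr : ∃ i : Fin d,
      P.Tinf η (Function.update x i (x i + 1)) ≤ leftVal P.T t (Function.update x i (x i + 1)) η ∨
      P.Tinf η (Function.update x i (x i - 1)) ≤ leftVal P.T t (Function.update x i (x i - 1)) η := by
    by_contra hcon
    push_neg at hcon
    have hsum : (2 * d : ℤ) ≤
        nbrSum (fun z => (P.Tinf η z : ℤ)) x - nbrSum (fun z => (leftVal P.T t z η : ℤ)) x := by
      unfold nbrSum
      rw [← Finset.sum_sub_distrib]
      calc (2 * d : ℤ) = ∑ _i : Fin d, (2 : ℤ) := by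
            simp [Finset.sum_const, Finset.card_univ, mul_comm]
        _ ≤ _ := by
            refine Finset.sum_le_sum fun i _ => ?_
            obtain ⟨h1, h2⟩ := hcon i
            dsimp only
            omega
    unfold configLeft at hLx
    unfold finalConfig at hSx
    have hx : (leftVal P.T t x η : ℤ) + 1 = (P.Tinf η x : ℤ) := by exact_mod_cast hlv
    have hg : (2 * (d : ℤ)) * (P.Tinf η x : ℤ)
        = 2 * (d : ℤ) * (leftVal P.T t x η : ℤ) + 2 * d := by rw [← hx]; ring
    linarith
  obtain ⟨i, hi⟩ := hnbr
  have key : ∀ y : Site d, Adjacent y x → P.Tinf η y ≤ leftVal P.T t y η →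
      P.lastT η y < P.lastT η x := by
    intro y hadj hle
    have hge := P.leftVal_le_tinf η hfin t y
    have heq : leftVal P.T t y η = P.Tinf η y := le_antisymm hge hle
    have hpos : 1 ≤ leftVal P.T t y η := heq ▸ hall y
    -- the sup defining leftVal is attained at some s < t
    have hne : ((fun s => P.T s y η) '' Set.Iio t).Nonempty :=
      ⟨P.T 0 y η, 0, ht0, rfl⟩
    have hbdd : BddAbove ((fun s => P.T s y η) '' Set.Iio t) := by
      refine (hfin y).mono ?_
      rintro a ⟨s, -, rfl⟩
      exact ⟨s, rfl⟩
    have hmem := Nat.sSup_mem hne hbdd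
    obtain ⟨s, hs, hseq⟩ := hmem
    have : P.T s y η = P.Tinf η y := by
      rw [← heq]; exact hseq
    exact lt_of_le_of_lt (P.lastT_le η y this) hs
  rcases hi with hi | hi
  · refine ⟨Function.update x i (x i + 1), ?_, key _ ?_ hi⟩ <;>
    · unfold Adjacent
      rw [Finset.sum_eq_single i]
      · simp
      · intro j _ hj; simp [Function.update_of_ne hj]
      · simp
  · refine ⟨Function.update x i (x i - 1), ?_, key _ ?_ hi⟩ <;>
    · unfold Adjacent
      rw [Finset.sum_eq_single i]
      · simp
      · intro j _ hj; simp [Function.update_of_ne hj]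
      · simp

end TopplingProcedure

end AuxChain

/-- Theorem 2.8(4): if `T` is a stabilizing legal toppling procedure for `η`, then
at least one site never topples. -/
theorem statement3 (d : ℕ) (hd : 1 ≤ d) (η : Config d)
    (T : TopplingProcedure d) (hT : T.Legal) (hstab : T.StabilizingFor η) :
    ∃ x : Site d, T.Tinf η x = 0 := by
  by_contra h
  push_neg at h
  have hall : ∀ z : Site d, 1 ≤ T.Tinf η z := fun z => Nat.one_le_iff_ne_zero.2 (h z)
  have key := fun x => T.exists_nbr η hT hstab hall x
  choose nxt hadj hlt using key
  apply T.noBackwardChain η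
  refine ⟨fun n => nxt^[n] 0, fun n => T.lastT η (nxt^[n] 0), fun i => ?_, ?_, fun i => ?_⟩
  · show Adjacent (nxt^[i + 1] 0) (nxt^[i] 0)
    rw [Function.iterate_succ_apply']
    exact hadj _
  · refine strictAnti_nat_of_succ_lt fun n => ?_
    show T.lastT η (nxt^[n + 1] 0) < T.lastT η (nxt^[n] 0)
    rw [Function.iterate_succ_apply']
    exact hlt _
  · exact T.topplesAt_lastT η hstab.1 (hall _)
end

section
/- Let d ≥ 1 and let μ be a translation invariant probability measure on X with E_μ[η(0)] = ρ < ∞. Suppose μ is stabilizable. Then the expected height is conserved by stabilization: E_μ[η_∞(0)] = ρ, where η_∞ is the (μ-a.s. well-defined) stabilized configuration. -/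
open MeasureTheory Filter Topology
open scoped ENNReal NNReal

namespace Sand
variable {d : ℕ}

theorem nbrSum_mono {M : Type*} [AddCommMonoid M] [PartialOrder M] [IsOrderedAddMonoid M] {f g : Site d → M} (h : ∀ z, f z ≤ g z)
    (y : Site d) : nbrSum f y ≤ nbrSum g y :=
  Finset.sum_le_sum fun i _ => add_le_add (h _) (h _)

theorem nbrSum_add {M : Type*} [AddCommMonoid M] (f g : Site d → M) (y : Site d) :
    nbrSum (fun z => f z + g z) y = nbrSum f y + nbrSum g y := by
  unfold nbrSum
  rw [← Finset.sum_add_distrib]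
  exact Finset.sum_congr rfl fun i _ => add_add_add_comm _ _ _ _

theorem nbrSum_natCast (w : Site d → ℕ) (y : Site d) :
    ((nbrSum w y : ℕ) : ℤ) = nbrSum (fun x => (w x : ℤ)) y := by
  unfold nbrSum; push_cast; ring

theorem nbrSum_natCast_ennreal (w : Site d → ℕ) (y : Site d) :
    ((nbrSum w y : ℕ) : ℝ≥0∞) = nbrSum (fun x => (w x : ℝ≥0∞)) y := by
  unfold nbrSum; push_cast; ring

/-- congruence: nbrSum only depends on values at the `2d` neighbours. -/
theorem nbrSum_congr {M : Type*} [AddCommMonoid M] {f g : Site d → M} (y : Site d)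
    (h : ∀ i : Fin d, f (Function.update y i (y i + 1)) = g (Function.update y i (y i + 1)) ∧
        f (Function.update y i (y i - 1)) = g (Function.update y i (y i - 1))) :
    nbrSum f y = nbrSum g y := by
  unfold nbrSum
  exact Finset.sum_congr rfl fun i _ => by rw [(h i).1, (h i).2]

theorem update_sub (y : Site d) (i j : Fin d) (s : ℤ) :
    Function.update y i (y i + s) j - y j = if j = i then s else 0 := by
  rcases eq_or_ne j i with rfl | hji
  · simp
  · simp [Function.update_of_ne hji, hji]

theorem adjacent_update (y : Site d) (i : Fin d) (s : ℤ) (hs : s.natAbs = 1) :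
    Adjacent (Function.update y i (y i + s)) y := by
  unfold Adjacent
  rw [Finset.sum_eq_single i]
  · rw [update_sub]; simpa
  · intro j _ hji; rw [update_sub]; simp [hji]
  · simp

def heightZ (η : Config d) (w : Site d → ℕ) (y : Site d) : ℤ :=
  (η y : ℤ) + nbrSum (fun x => (w x : ℤ)) y - 2 * d * (w y : ℤ)

theorem heightZ_add (η : Config d) (u δ : Site d → ℕ) (y : Site d) :
    heightZ η (fun z => u z + δ z) y
      = heightZ η u y + nbrSum (fun x => (δ x : ℤ)) y - 2 * d * (δ y : ℤ) := by
  unfold heightZ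
  have : (fun x => ((u x + δ x : ℕ) : ℤ)) = fun x => (u x : ℤ) + (δ x : ℤ) := by
    ext x; push_cast; ring
  rw [this, nbrSum_add]
  push_cast; ring

theorem heightZ_congr (η : Config d) {u u' : Site d → ℕ} (y : Site d)
    (hy : u y = u' y)
    (h : ∀ i : Fin d, u (Function.update y i (y i + 1)) = u' (Function.update y i (y i + 1)) ∧
        u (Function.update y i (y i - 1)) = u' (Function.update y i (y i - 1))) :
    heightZ η u y = heightZ η u' y := by
  unfold heightZ
  have hn := nbrSum_congr (M := ℤ) (f := fun x => (u x : ℤ)) (g := fun x => (u' x : ℤ)) y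
    (fun i => ⟨by rw [(h i).1], by rw [(h i).2]⟩)
  rw [hy, hn]

/-- the ℕ-level conservation identity: `η y + (grains received) = stableheight + 2d·(topplings)`,
valid whenever `heightZ η u y ≥ 0`. -/
theorem heightZ_toNat_eq (η : Config d) (u : Site d → ℕ) (y : Site d)
    (h : 0 ≤ heightZ η u y) :
    η y + nbrSum u y = (heightZ η u y).toNat + 2 * d * u y := by
  have := Int.toNat_of_nonneg h
  have h2 : ((η y + nbrSum u y : ℕ) : ℤ) = (((heightZ η u y).toNat + 2 * d * u y : ℕ) : ℤ) := by
    push_cast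
    rw [this, nbrSum_natCast]
    unfold heightZ; ring
  exact_mod_cast h2

/-! ### finite-volume parallel toppling -/

open Classical in
/-- indicator of a toppling at `x` (inside `V`, currently unstable). -/
noncomputable def topple? (η : Config d) (V : Finset (Site d)) (u : Site d → ℕ) (x : Site d) : ℕ :=
  if x ∈ V ∧ 2 * (d : ℤ) ≤ heightZ η u x then 1 else 0

noncomputable def uIter (η : Config d) (V : Finset (Site d)) : ℕ → Site d → ℕ
  | 0 => fun _ => 0
  | k + 1 => fun x => uIter η V k x + topple? η V (uIter η V k) x

/-- all sites of `V` are stable after `k` rounds. -/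
def stabAt (η : Config d) (V : Finset (Site d)) (k : ℕ) : Prop :=
  ∀ x ∈ V, heightZ η (uIter η V k) x < 2 * (d : ℤ)

theorem heightZ_uIter_succ (η : Config d) (V : Finset (Site d)) (k : ℕ) (y : Site d) :
    heightZ η (uIter η V (k + 1)) y
      = heightZ η (uIter η V k) y + nbrSum (fun x => (topple? η V (uIter η V k) x : ℤ)) y
        - 2 * d * (topple? η V (uIter η V k) y : ℤ) := by
  have : uIter η V (k + 1) = fun x => uIter η V k x + topple? η V (uIter η V k) x := rfl
  rw [this, heightZ_add]

theorem topple?_nonneg (η : Config d) (V : Finset (Site d)) (u : Site d → ℕ) (x : Site d) :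
    (0 : ℤ) ≤ (topple? η V u x : ℤ) := Int.ofNat_nonneg _

theorem uIter_height_nonneg (η : Config d) (V : Finset (Site d)) :
    ∀ k y, 0 ≤ heightZ η (uIter η V k) y := by
  intro k
  induction k with
  | zero =>
    intro y
    have h0 : uIter η V 0 = fun _ => 0 := rfl
    simp [h0, heightZ, nbrSum]
  | succ k ih =>
    intro y
    rw [heightZ_uIter_succ]
    have hnb : (0:ℤ) ≤ nbrSum (fun x => (topple? η V (uIter η V k) x : ℤ)) y := by
      unfold nbrSum
      exact Finset.sum_nonneg fun i _ => add_nonneg (topple?_nonneg _ _ _ _) (topple?_nonneg _ _ _ _)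
    by_cases hy : y ∈ V ∧ 2 * (d : ℤ) ≤ heightZ η (uIter η V k) y
    · have ht : (topple? η V (uIter η V k) y : ℤ) = 1 := by unfold topple?; simp [hy]
      rw [ht]
      have := hy.2
      nlinarith [Int.ofNat_nonneg d]
    · have ht : (topple? η V (uIter η V k) y : ℤ) = 0 := by unfold topple?; simp [hy]
      rw [ht]
      have := ih y
      linarith

theorem uIter_mono_k (η : Config d) (V : Finset (Site d)) {k j : ℕ} (h : k ≤ j) (x : Site d) :
    uIter η V k x ≤ uIter η V j x := by
  induction j with
  | zero =>
    have : k = 0 := by omega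
    subst this; exact le_refl _
  | succ j ih =>
    rcases Nat.lt_or_ge k (j+1) with hk | hk
    · exact le_trans (ih (by omega)) (Nat.le_add_right _ _)
    · have : k = j + 1 := by omega
      subst this; exact le_refl _

theorem uIter_zero_off (η : Config d) (V : Finset (Site d)) (k : ℕ) {x : Site d} (hx : x ∉ V) :
    uIter η V k x = 0 := by
  induction k with
  | zero => rfl
  | succ k ih =>
    show uIter η V k x + topple? η V (uIter η V k) x = 0
    have : topple? η V (uIter η V k) x = 0 := by unfold topple?; simp [hx]
    omega

/-- least-action principle: the parallel toppling counts are dominated by any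
`w` which is stable on `V`. -/
theorem uIter_le (η : Config d) (V : Finset (Site d)) {w : Site d → ℕ}
    (hw : ∀ x ∈ V, heightZ η w x ≤ 2 * (d : ℤ) - 1) :
    ∀ k x, uIter η V k x ≤ w x := by
  intro k
  induction k with
  | zero => intro x; exact Nat.zero_le _
  | succ k ih =>
    intro x
    show uIter η V k x + topple? η V (uIter η V k) x ≤ w x
    by_cases hx : x ∈ V ∧ 2 * (d : ℤ) ≤ heightZ η (uIter η V k) x
    · have ht : topple? η V (uIter η V k) x = 1 := by unfold topple?; simp [hx]
      rw [ht]
      rcases Nat.lt_or_ge (uIter η V k x) (w x) with h | h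
      · omega
      · exfalso
        have hxw : uIter η V k x = w x := le_antisymm (ih x) h
        have hle : heightZ η (uIter η V k) x ≤ heightZ η w x := by
          unfold heightZ
          have h1 : nbrSum (fun z => (uIter η V k z : ℤ)) x ≤ nbrSum (fun z => (w z : ℤ)) x :=
            nbrSum_mono (fun z => by exact_mod_cast ih z) x
          rw [hxw]
          linarith
        have := hw x hx.1
        have := hx.2
        linarith
    · have ht : topple? η V (uIter η V k) x = 0 := by unfold topple?; simp [hx]
      rw [ht]; simpa using ih x

theorem stabAt_succ_eq {η : Config d} {V : Finset (Site d)} {k : ℕ} (h : stabAt η V k) :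
    uIter η V (k + 1) = uIter η V k := by
  funext x
  show uIter η V k x + topple? η V (uIter η V k) x = uIter η V k x
  have : topple? η V (uIter η V k) x = 0 := by
    unfold topple?
    by_cases hx : x ∈ V
    · have := h x hx; simp; intro h'; omega
    · simp [hx]
  omega

theorem uIter_eq_of_stabAt {η : Config d} {V : Finset (Site d)} {k : ℕ} (h : stabAt η V k) :
    ∀ j, k ≤ j → uIter η V j = uIter η V k := by
  intro j hj
  induction j with
  | zero => have : k = 0 := by omega
            subst this; rfl
  | succ j ih =>
    rcases Nat.lt_or_ge k (j+1) with hk | hk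
    · have hj' : k ≤ j := by omega
      have hij := ih hj'
      have hst : stabAt η V j := by intro x hx; rw [hij] at *; exact h x hx
      rw [stabAt_succ_eq hst, hij]
    · have : k = j + 1 := by omega
      subst this; rfl

theorem stabAt_of_le {η : Config d} {V : Finset (Site d)} {k j : ℕ} (h : stabAt η V k)
    (hj : k ≤ j) : stabAt η V j := by
  intro x hx; rw [uIter_eq_of_stabAt h j hj]; exact h x hx

theorem uIter_eq_of_stabAt_two {η : Config d} {V : Finset (Site d)} {k j : ℕ}
    (hk : stabAt η V k) (hj : stabAt η V j) : uIter η V k = uIter η V j := by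
  rcases Nat.le_total k j with h | h
  · rw [uIter_eq_of_stabAt hk j h]
  · rw [uIter_eq_of_stabAt hj k h]

/-! ### termination of finite-volume toppling -/

/-- squared norm (ℕ). -/
def qN (x : Site d) : ℕ := ∑ i, (x i).natAbs ^ 2
/-- ℓ¹ norm (ℕ). -/
def sN (x : Site d) : ℕ := ∑ i, (x i).natAbs

theorem qN_cast (x : Site d) : ((qN x : ℕ) : ℤ) = ∑ i, (x i) ^ 2 := by
  unfold qN; push_cast
  exact Finset.sum_congr rfl fun i _ => by rw [sq_abs]

theorem sum_sq_update (x : Site d) (i : Fin d) (a : ℤ) :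
    ∑ j, (Function.update x i a j) ^ 2 = (∑ j, (x j) ^ 2) - (x i) ^ 2 + a ^ 2 := by
  have h : ∀ j, (Function.update x i a j) ^ 2 = (if j = i then a ^ 2 else (x j) ^ 2) := by
    intro j
    rcases eq_or_ne j i with rfl | hj
    · simp
    · simp [Function.update_of_ne hj, hj]
  rw [Finset.sum_congr rfl fun j _ => h j]
  rw [← Finset.add_sum_erase _ _ (Finset.mem_univ i)]
  simp only [if_pos rfl]
  have : ∑ j ∈ Finset.univ.erase i, (if j = i then a ^ 2 else (x j) ^ 2)
      = ∑ j ∈ Finset.univ.erase i, (x j) ^ 2 := by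
    apply Finset.sum_congr rfl
    intro j hj
    simp [Finset.ne_of_mem_erase hj]
  rw [this, Finset.sum_erase_eq_sub (Finset.mem_univ i)]
  simp
  ring

theorem qN_update_cast (x : Site d) (i : Fin d) (a : ℤ) :
    ((qN (Function.update x i a) : ℕ) : ℤ) = (qN x : ℤ) - (x i) ^ 2 + a ^ 2 := by
  rw [qN_cast, qN_cast, sum_sq_update]

/-- the radius bound for `V`. -/
def Cb (V : Finset (Site d)) : ℕ := V.sup fun x => qN x + 2 * sN x + 1

theorem le_Cb {V : Finset (Site d)} {x : Site d} (hx : x ∈ V) :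
    qN x + 2 * sN x + 1 ≤ Cb V := Finset.le_sup (f := fun x => qN x + 2 * sN x + 1) hx

theorem natAbs_le_sN (x : Site d) (i : Fin d) : (x i).natAbs ≤ sN x :=
  Finset.single_le_sum (f := fun j => (x j).natAbs) (fun j _ => Nat.zero_le _) (Finset.mem_univ i)

theorem qN_update_le {V : Finset (Site d)} {x : Site d} (hx : x ∈ V) (i : Fin d) {s : ℤ}
    (hs : s.natAbs = 1) : qN (Function.update x i (x i + s)) ≤ Cb V := by
  have hq := qN_update_cast x i (x i + s)
  have hs1 : s = 1 ∨ s = -1 := by omega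
  have habs := natAbs_le_sN x i
  have hC := le_Cb hx
  have key : ((qN (Function.update x i (x i + s)) : ℕ) : ℤ) ≤ ((Cb V : ℕ) : ℤ) := by
    rw [hq]
    have h2 : ((qN x : ℕ) : ℤ) + 2 * ((sN x : ℕ) : ℤ) + 1 ≤ ((Cb V : ℕ) : ℤ) := by
      exact_mod_cast hC
    have h3 : -((sN x : ℕ) : ℤ) ≤ x i ∧ x i ≤ ((sN x : ℕ) : ℤ) := by omega
    rcases hs1 with rfl | rfl <;> nlinarith [h3.1, h3.2]
  exact_mod_cast key

theorem qN_self_le {V : Finset (Site d)} {x : Site d} (hx : x ∈ V) : qN x ≤ Cb V := by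
  have := le_Cb hx; omega

/-- the explicit stabilizer used to bound the toppling counts. -/
def wfun (η : Config d) (V : Finset (Site d)) (x : Site d) : ℕ :=
  (V.sup η) * (Cb V - qN x)

theorem wfun_cast {η : Config d} {V : Finset (Site d)} {x : Site d} (h : qN x ≤ Cb V) :
    ((wfun η V x : ℕ) : ℤ) = ((V.sup η : ℕ) : ℤ) * ((Cb V : ℤ) - (qN x : ℤ)) := by
  unfold wfun; push_cast [h]; ring

theorem heightZ_wfun (η : Config d) (V : Finset (Site d)) (hd : 1 ≤ d) :
    ∀ x ∈ V, heightZ η (wfun η V) x ≤ 2 * (d : ℤ) - 1 := by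
  intro x hx
  have hnb : nbrSum (fun z => (wfun η V z : ℤ)) x
      = 2 * d * ((V.sup η : ℕ) : ℤ) * ((Cb V : ℤ) - (qN x : ℤ)) - 2 * d * ((V.sup η : ℕ) : ℤ) := by
    unfold nbrSum
    have hterm : ∀ i : Fin d,
        (wfun η V (Function.update x i (x i + 1)) : ℤ)
          + (wfun η V (Function.update x i (x i - 1)) : ℤ)
        = 2 * ((V.sup η : ℕ) : ℤ) * ((Cb V : ℤ) - (qN x : ℤ)) - 2 * ((V.sup η : ℕ) : ℤ) := by
      intro i
      have h1 := qN_update_le hx i (s := 1) rfl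
      have h2 := qN_update_le hx i (s := -1) (by norm_num)
      have hsub : x i - 1 = x i + (-1) := by ring
      rw [wfun_cast h1, hsub, wfun_cast h2]
      have e1 := qN_update_cast x i (x i + 1)
      have e2 := qN_update_cast x i (x i + (-1))
      rw [e1, e2]
      ring
    rw [Finset.sum_congr rfl fun i _ => hterm i]
    rw [Finset.sum_const, Finset.card_univ, Fintype.card_fin]
    push_cast
    ring
  have hself : ((wfun η V x : ℕ) : ℤ) = ((V.sup η : ℕ) : ℤ) * ((Cb V : ℤ) - (qN x : ℤ)) :=
    wfun_cast (qN_self_le hx)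
  unfold heightZ
  rw [hnb, hself]
  have hη : (η x : ℤ) ≤ ((V.sup η : ℕ) : ℤ) := by exact_mod_cast Finset.le_sup (f := η) hx
  have hd2 : (1 : ℤ) ≤ (d : ℤ) := by exact_mod_cast hd
  have hN0 : (0 : ℤ) ≤ ((V.sup η : ℕ) : ℤ) := Int.ofNat_nonneg _
  nlinarith

/-- upper bound for the total number of topplings. -/
def Bnd (η : Config d) (V : Finset (Site d)) : ℕ := ∑ x ∈ V, wfun η V x

theorem sum_uIter_le (η : Config d) (V : Finset (Site d)) (hd : 1 ≤ d) (k : ℕ) :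
    ∑ x ∈ V, uIter η V k x ≤ Bnd η V :=
  Finset.sum_le_sum fun x _ => uIter_le η V (heightZ_wfun η V hd) k x

theorem sum_uIter_succ_of_not_stab (η : Config d) (V : Finset (Site d)) {k : ℕ}
    (h : ¬ stabAt η V k) :
    ∑ x ∈ V, uIter η V k x + 1 ≤ ∑ x ∈ V, uIter η V (k + 1) x := by
  unfold stabAt at h
  push_neg at h
  obtain ⟨x, hxV, hx⟩ := h
  have hsum : ∑ z ∈ V, uIter η V (k+1) z
      = ∑ z ∈ V, (uIter η V k z + topple? η V (uIter η V k) z) := rfl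
  rw [hsum, Finset.sum_add_distrib]
  have : 1 ≤ ∑ z ∈ V, topple? η V (uIter η V k) z := by
    have ht : topple? η V (uIter η V k) x = 1 := by unfold topple?; simp [hxV, hx]
    calc 1 = topple? η V (uIter η V k) x := ht.symm
    _ ≤ ∑ z ∈ V, topple? η V (uIter η V k) z :=
        Finset.single_le_sum (fun z _ => Nat.zero_le _) hxV
  omega

theorem stabAt_bnd (η : Config d) (V : Finset (Site d)) (hd : 1 ≤ d) :
    stabAt η V (Bnd η V + 1) := by
  by_contra hcon
  have key : ∀ j, j ≤ Bnd η V + 1 → j ≤ ∑ x ∈ V, uIter η V j x := by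
    intro j
    induction j with
    | zero => intro _; exact Nat.zero_le _
    | succ j ih =>
      intro hj
      have hnost : ¬ stabAt η V j := by
        intro hst
        exact hcon (stabAt_of_le hst (by omega))
      have h1 := ih (by omega)
      have h2 := sum_uIter_succ_of_not_stab η V hnost
      omega
  have := key (Bnd η V + 1) (le_refl _)
  have := sum_uIter_le η V hd (Bnd η V + 1)
  omega

/-- the finite-volume odometer. -/
noncomputable def uV (η : Config d) (V : Finset (Site d)) (x : Site d) : ℕ :=
  uIter η V (Bnd η V + 1) x

theorem uV_eq_of_stabAt {η : Config d} {V : Finset (Site d)} {k : ℕ} (hd : 1 ≤ d)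
    (h : stabAt η V k) : uV η V = uIter η V k :=
  uIter_eq_of_stabAt_two (stabAt_bnd η V hd) h

theorem uV_stab (η : Config d) (V : Finset (Site d)) (hd : 1 ≤ d) :
    ∀ x ∈ V, heightZ η (uV η V) x < 2 * (d : ℤ) :=
  stabAt_bnd η V hd

theorem uV_height_nonneg (η : Config d) (V : Finset (Site d)) (y : Site d) :
    0 ≤ heightZ η (uV η V) y := uIter_height_nonneg η V _ y

theorem uV_zero_off (η : Config d) (V : Finset (Site d)) {x : Site d} (hx : x ∉ V) :
    uV η V x = 0 := uIter_zero_off η V _ hx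

theorem uV_le (η : Config d) (V : Finset (Site d)) {w : Site d → ℕ}
    (hw : ∀ x ∈ V, heightZ η w x ≤ 2 * (d : ℤ) - 1) (x : Site d) : uV η V x ≤ w x :=
  uIter_le η V hw _ x

theorem uV_mono_V (η : Config d) {V W : Finset (Site d)} (hd : 1 ≤ d) (hVW : V ⊆ W)
    (x : Site d) : uV η V x ≤ uV η W x := by
  apply uV_le
  intro z hz
  have := uV_stab η W hd z (hVW hz)
  omega

theorem nat_sSup_le {s : Set ℕ} {m : ℕ} (h : ∀ a ∈ s, a ≤ m) : sSup s ≤ m := by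
  rcases Set.eq_empty_or_nonempty s with rfl | hne
  · rw [csSup_empty]; exact Nat.zero_le _
  · exact csSup_le hne h

theorem nat_lt_sSup {s : Set ℕ} {m : ℕ} (h : m < sSup s) : ∃ a ∈ s, m < a := by
  by_contra hcon
  push_neg at hcon
  exact absurd (nat_sSup_le hcon) (by omega)

theorem leftVal_le {P : TopplingProcedure d} {η : Config d} {t : NNReal} {x : Site d} {m : ℕ}
    (h : ∀ s, s < t → P.T s x η ≤ m) : leftVal P.T t x η ≤ m :=
  nat_sSup_le fun a ha => by
    obtain ⟨s, hs, rfl⟩ := ha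
    exact h s hs

theorem lt_leftVal {P : TopplingProcedure d} {η : Config d} {t : NNReal} {x : Site d} {m : ℕ}
    (h : m < leftVal P.T t x η) : ∃ s, s < t ∧ m < P.T s x η := by
  obtain ⟨a, ha, hma⟩ := nat_lt_sSup h
  obtain ⟨s, hs, rfl⟩ := ha
  exact ⟨s, hs, hma⟩

theorem configLeft_eq_heightZ (P : TopplingProcedure d) (η : Config d) (t : NNReal)
    (y : Site d) : P.configLeft η t y = heightZ η (fun z => leftVal P.T t z η) y := rfl

/-- Key step for the continuous-time least-action principle: if the toppling count at `x`
ever exceeds a everywhere-stable `w`, then there is a toppling time `c` for `x` at which it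
first exceeds, and the count of some neighbour exceeded `w` strictly before `c`. -/
theorem exceed_step (P : TopplingProcedure d) (hP : P.Legal) (η : Config d)
    {w : Site d → ℕ} (hw : ∀ z, heightZ η w z ≤ 2 * (d : ℤ) - 1) {x : Site d} {t : NNReal}
    (h : w x < P.T t x η) :
    ∃ (c : NNReal) (x' : Site d) (s : NNReal), 0 < c ∧ c ≤ t ∧
      leftVal P.T c x η < P.T c x η ∧ Adjacent x' x ∧ s < c ∧ w x' < P.T s x' η := by
  classical
  set A : Set NNReal := {s | w x < P.T s x η} with hA
  have hne : t ∈ A := h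
  have hbdd : BddBelow A := OrderBot.bddBelow A
  set c : NNReal := sInf A with hc
  have hct : c ≤ t := csInf_le hbdd hne
  have hTc : w x < P.T c x η := by
    obtain ⟨ε, hε, hright⟩ := P.rightCont x η c
    have hlt : c < c + ε := lt_add_of_pos_right c hε
    obtain ⟨s, hsA, hslt⟩ := exists_lt_of_csInf_lt ⟨t, hne⟩ hlt
    have hcs : c ≤ s := csInf_le hbdd hsA
    rw [← hright s hcs hslt]
    exact hsA
  have hlv : leftVal P.T c x η ≤ w x := by
    apply leftVal_le
    intro s hs
    by_contra hgt
    push_neg at hgt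
    exact absurd (csInf_le hbdd (show s ∈ A from hgt)) (not_le.mpr hs)
  have hc0 : 0 < c := by
    rcases eq_or_ne c 0 with h0 | h0
    · exfalso
      rw [h0, P.init] at hTc
      omega
    · exact zero_lt_iff.mpr h0
  have hjump : P.T c x η = w x + 1 := by
    have := P.jumpLe x η c
    omega
  have hlv2 : leftVal P.T c x η = w x := by
    have := P.jumpLe x η c
    omega
  have htop : leftVal P.T c x η < P.T c x η := by omega
  have hleg : 2 * (d : ℤ) ≤ P.configLeft η c x := hP η c x hc0 htop
  rw [configLeft_eq_heightZ] at hleg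
  -- find the neighbour whose left count exceeds w
  have hnbr : ∃ (x' : Site d), Adjacent x' x ∧ w x' < leftVal P.T c x' η := by
    by_contra hcon
    push_neg at hcon
    have hmono : nbrSum (fun z => (leftVal P.T c z η : ℤ)) x
        ≤ nbrSum (fun z => (w z : ℤ)) x := by
      apply Finset.sum_le_sum
      intro i _
      have h1 := hcon _ (adjacent_update x i 1 rfl)
      have h2 := hcon _ (adjacent_update x i (-1) (by norm_num))
      have h1' : leftVal P.T c (Function.update x i (x i + 1)) η
          ≤ w (Function.update x i (x i + 1)) := by omega
      have h2' : leftVal P.T c (Function.update x i (x i + (-1))) η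
          ≤ w (Function.update x i (x i + (-1))) := by omega
      have hsub : x i - 1 = x i + (-1) := by ring
      rw [hsub]
      have c1 : (leftVal P.T c (Function.update x i (x i + 1)) η : ℤ)
          ≤ (w (Function.update x i (x i + 1)) : ℤ) := by exact_mod_cast h1'
      have c2 : (leftVal P.T c (Function.update x i (x i + (-1))) η : ℤ)
          ≤ (w (Function.update x i (x i + (-1))) : ℤ) := by exact_mod_cast h2'
      exact add_le_add c1 c2
    have hx1 : heightZ η (fun z => leftVal P.T c z η) x
        ≤ heightZ η w x + 2 * d * ((w x : ℤ) - (leftVal P.T c x η : ℤ)) := by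
      unfold heightZ
      have : (leftVal P.T c x η : ℤ) = (w x : ℤ) := by exact_mod_cast hlv2
      rw [this]
      linarith
    have := hw x
    rw [hlv2] at hx1
    simp at hx1
    linarith
  obtain ⟨x', hadj, hx'⟩ := hnbr
  obtain ⟨s, hs, hTs⟩ := lt_leftVal hx'
  exact ⟨c, x', s, hc0, hct, htop, hadj, hs, hTs⟩

/-- Continuous-time least-action principle: a legal toppling procedure never exceeds
any everywhere-stable toppling function `w`. -/
theorem T_le_of_stable (P : TopplingProcedure d) (hP : P.Legal) (η : Config d)
    {w : Site d → ℕ} (hw : ∀ z, heightZ η w z ≤ 2 * (d : ℤ) - 1) (t : NNReal) (x : Site d) :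
    P.T t x η ≤ w x := by
  by_contra hcon
  push_neg at hcon
  set D := {p : Site d × NNReal // w p.1 < P.T p.2 p.1 η} with hD
  have step : ∀ p : D, ∃ q : NNReal × D, 0 < q.1 ∧ q.1 ≤ p.val.2 ∧
      leftVal P.T q.1 p.val.1 η < P.T q.1 p.val.1 η ∧ Adjacent q.2.val.1 p.val.1 ∧
      q.2.val.2 < q.1 := by
    rintro ⟨⟨y, ty⟩, hy⟩
    obtain ⟨c, x', s, hc0, hct, htop, hadj, hs, hTs⟩ := exceed_step P hP η hw hy
    exact ⟨⟨c, ⟨⟨x', s⟩, hTs⟩⟩, hc0, hct, htop, hadj, hs⟩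
  choose F hF1 hF2 hF3 hF4 hF5 using step
  let seq : ℕ → D := fun n => Nat.rec (⟨⟨x, t⟩, hcon⟩ : D) (fun _ p => (F p).2) n
  have hseq : ∀ n, seq (n + 1) = (F (seq n)).2 := fun n => rfl
  let ts : ℕ → NNReal := fun n => (F (seq n)).1
  let xs : ℕ → Site d := fun n => (seq n).val.1
  apply P.noBackwardChain η
  refine ⟨xs, ts, ?_, ?_, ?_⟩
  · intro i
    have h4 := hF4 (seq i)
    show Adjacent ((seq (i+1)).val.1) ((seq i).val.1)
    have e : (seq (i+1)).val.1 = ((F (seq i)).2).val.1 := by rw [hseq i]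
    rw [e]; exact h4
  · apply strictAnti_nat_of_succ_lt
    intro n
    have h5 := hF5 (seq n)
    have h2 := hF2 (seq (n + 1))
    rw [hseq n] at h2
    exact lt_of_le_of_lt h2 h5
  · intro i
    exact hF3 (seq i)

/-! ### boxes, translation covariance, measurability -/

/-- the box `[-n,n]^d`. -/
noncomputable def box (d n : ℕ) : Finset (Site d) :=
  Fintype.piFinset fun _ : Fin d => Finset.Icc (-(n : ℤ)) (n : ℤ)

theorem mem_box {n : ℕ} {x : Site d} : x ∈ box d n ↔ ∀ i, (x i).natAbs ≤ n := by
  unfold box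
  rw [Fintype.mem_piFinset]
  constructor <;> intro h i <;> have := h i <;> simp [Finset.mem_Icc] at * <;> omega

theorem box_mono {n m : ℕ} (h : n ≤ m) : box d n ⊆ box d m := by
  intro x hx
  rw [mem_box] at *
  intro i; exact le_trans (hx i) h

/-- translate of a finite set of sites. -/
def trV (v : Site d) (V : Finset (Site d)) : Finset (Site d) := V.image (· + v)

theorem mem_trV {v z : Site d} {V : Finset (Site d)} : z ∈ trV v V ↔ z - v ∈ V := by
  unfold trV
  rw [Finset.mem_image]
  constructor
  · rintro ⟨y, hy, rfl⟩; simpa using hy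
  · intro h; exact ⟨z - v, h, by abel⟩

theorem update_add (x v : Site d) (i : Fin d) (s : ℤ) :
    Function.update (x + v) i ((x + v) i + s) = Function.update x i (x i + s) + v := by
  funext j
  rcases eq_or_ne j i with rfl | hj
  · simp [Pi.add_apply]; ring
  · simp [Function.update_of_ne hj, Pi.add_apply]

theorem heightZ_shift (η : Config d) (v : Site d) (w : Site d → ℕ) (x : Site d) :
    heightZ (shiftConfig v η) w x = heightZ η (fun z => w (z - v)) (x + v) := by
  unfold heightZ shiftConfig
  have h1 : nbrSum (fun z => ((w (z - v) : ℕ) : ℤ)) (x + v)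
      = nbrSum (fun z => ((w z : ℕ) : ℤ)) x := by
    unfold nbrSum
    apply Finset.sum_congr rfl
    intro i _
    rw [show ((x + v) i - 1) = ((x + v) i + (-1)) from by ring, update_add, update_add]
    simp [sub_eq_add_neg]
  rw [h1]
  simp

theorem topple?_shift (η : Config d) (v : Site d) (V : Finset (Site d)) (u : Site d → ℕ)
    (x : Site d) :
    topple? (shiftConfig v η) V u x = topple? η (trV v V) (fun z => u (z - v)) (x + v) := by
  unfold topple?
  apply if_congr _ rfl rfl
  rw [heightZ_shift, mem_trV]
  simp

theorem uIter_shift (η : Config d) (v : Site d) (V : Finset (Site d)) :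
    ∀ k x, uIter (shiftConfig v η) V k x = uIter η (trV v V) k (x + v) := by
  intro k
  induction k with
  | zero => intro x; rfl
  | succ k ih =>
    intro x
    show uIter (shiftConfig v η) V k x + topple? (shiftConfig v η) V (uIter (shiftConfig v η) V k) x
      = uIter η (trV v V) k (x + v) + topple? η (trV v V) (uIter η (trV v V) k) (x + v)
    rw [ih x]
    have e : uIter (shiftConfig v η) V k = fun z => uIter η (trV v V) k (z + v) := funext ih
    rw [e, topple?_shift]
    have e2 : (fun z => uIter η (trV v V) k ((z - v) + v)) = uIter η (trV v V) k := by
      funext z; simp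
    rw [e2]

theorem stabAt_shift (η : Config d) (v : Site d) (V : Finset (Site d)) (k : ℕ) :
    stabAt (shiftConfig v η) V k ↔ stabAt η (trV v V) k := by
  unfold stabAt
  constructor
  · intro h x hx
    have hx' : (x - v) ∈ V := mem_trV.mp hx
    have := h (x - v) hx'
    rw [heightZ_shift] at this
    have e : (fun z => uIter (shiftConfig v η) V k (z - v)) = uIter η (trV v V) k := by
      funext z; rw [uIter_shift]; simp
    rw [e] at this
    simpa using this
  · intro h x hx
    rw [heightZ_shift]
    have e : (fun z => uIter (shiftConfig v η) V k (z - v)) = uIter η (trV v V) k := by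
      funext z; rw [uIter_shift]; simp
    rw [e]
    apply h
    rw [mem_trV]; simpa using hx

theorem uV_shift (hd : 1 ≤ d) (η : Config d) (v : Site d) (V : Finset (Site d)) (x : Site d) :
    uV (shiftConfig v η) V x = uV η (trV v V) (x + v) := by
  have h1 : stabAt η (trV v V) (Bnd (shiftConfig v η) V + 1) :=
    (stabAt_shift η v V _).mp (stabAt_bnd (shiftConfig v η) V hd)
  have h2 : stabAt η (trV v V) (Bnd η (trV v V) + 1) := stabAt_bnd η (trV v V) hd
  show uIter (shiftConfig v η) V (Bnd (shiftConfig v η) V + 1) x = _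
  rw [uIter_shift]
  unfold uV
  rw [uIter_eq_of_stabAt_two h1 h2]

/-- the infinite-volume odometer as a `ℝ≥0∞`-valued supremum over boxes. -/
noncomputable def uInf (η : Config d) (x : Site d) : ℝ≥0∞ :=
  ⨆ n : ℕ, (uV η (box d n) x : ℝ≥0∞)

/-- bound on the coordinates of `v`. -/
def vBnd (v : Site d) : ℕ := Finset.univ.sup fun i => (v i).natAbs

theorem trV_box_subset (v : Site d) (n : ℕ) : trV v (box d n) ⊆ box d (n + vBnd v) := by
  intro z hz
  rw [mem_trV, mem_box] at hz
  rw [mem_box]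
  intro i
  have h1 := hz i
  have h2 : (v i).natAbs ≤ vBnd v := Finset.le_sup (f := fun i => (v i).natAbs) (Finset.mem_univ i)
  simp [Pi.sub_apply] at h1
  omega

theorem box_subset_trV (v : Site d) (n : ℕ) : box d n ⊆ trV v (box d (n + vBnd v)) := by
  intro z hz
  rw [mem_box] at hz
  rw [mem_trV, mem_box]
  intro i
  have h1 := hz i
  have h2 : (v i).natAbs ≤ vBnd v := Finset.le_sup (f := fun i => (v i).natAbs) (Finset.mem_univ i)
  simp [Pi.sub_apply]
  omega

theorem uInf_shift (hd : 1 ≤ d) (η : Config d) (v : Site d) (x : Site d) :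
    uInf (shiftConfig v η) x = uInf η (x + v) := by
  unfold uInf
  apply le_antisymm
  · apply iSup_le
    intro n
    rw [uV_shift hd]
    have h1 : uV η (trV v (box d n)) (x + v) ≤ uV η (box d (n + vBnd v)) (x + v) :=
      uV_mono_V η hd (trV_box_subset v n) (x + v)
    calc ((uV η (trV v (box d n)) (x + v) : ℕ) : ℝ≥0∞)
        ≤ (uV η (box d (n + vBnd v)) (x + v) : ℝ≥0∞) := by exact_mod_cast h1
      _ ≤ ⨆ n : ℕ, (uV η (box d n) (x + v) : ℝ≥0∞) := le_iSup (fun n : ℕ => (uV η (box d n) (x + v) : ℝ≥0∞)) _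
  · apply iSup_le
    intro n
    have h1 : uV η (box d n) (x + v) ≤ uV η (trV v (box d (n + vBnd v))) (x + v) :=
      uV_mono_V η hd (box_subset_trV v n) (x + v)
    calc ((uV η (box d n) (x + v) : ℕ) : ℝ≥0∞)
        ≤ (uV (shiftConfig v η) (box d (n + vBnd v)) x : ℝ≥0∞) := by
          rw [uV_shift hd]; exact_mod_cast h1
      _ ≤ ⨆ n : ℕ, (uV (shiftConfig v η) (box d n) x : ℝ≥0∞) :=
          le_iSup (fun n : ℕ => (uV (shiftConfig v η) (box d n) x : ℝ≥0∞)) _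

/-! ### measurability -/

theorem measurable_heightZ {u : Config d → Site d → ℕ} (V : Finset (Site d))
    (hu : ∀ z, Measurable fun η => u η z) (x : Site d) :
    Measurable fun η => heightZ η (u η) x := by
  unfold heightZ nbrSum
  apply Measurable.sub
  · apply Measurable.add
    · exact (measurable_from_top (f := fun n : ℕ => (n : ℤ))).comp (measurable_pi_apply x)
    · apply Finset.measurable_sum
      intro i _
      exact ((measurable_from_top (f := fun n : ℕ => (n : ℤ))).comp (hu _)).add
        ((measurable_from_top (f := fun n : ℕ => (n : ℤ))).comp (hu _))
  · exact Measurable.const_mul ((measurable_from_top (f := fun n : ℕ => (n : ℤ))).comp (hu x)) _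

theorem measurable_uIter (V : Finset (Site d)) (k : ℕ) (x : Site d) :
    Measurable fun η => uIter η V k x := by
  induction k generalizing x with
  | zero => exact measurable_const
  | succ k ih =>
    show Measurable fun η => uIter η V k x + topple? η V (uIter η V k) x
    apply Measurable.add (ih x)
    unfold topple?
    by_cases hx : x ∈ V
    · have : (fun η => if x ∈ V ∧ 2 * (d:ℤ) ≤ heightZ η (uIter η V k) x then 1 else 0)
          = fun η => if 2 * (d:ℤ) ≤ heightZ η (uIter η V k) x then 1 else 0 := by
        funext η; simp [hx]
      rw [this]
      have hh := measurable_heightZ V (fun z => ih z) x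
      exact Measurable.ite (hh (show MeasurableSet {z : ℤ | 2 * (d:ℤ) ≤ z} from trivial))
        measurable_const measurable_const
    · have : (fun η => if x ∈ V ∧ 2 * (d:ℤ) ≤ heightZ η (uIter η V k) x then (1:ℕ) else 0)
          = fun _ => 0 := by
        funext η; simp [hx]
      rw [this]
      exact measurable_const

theorem measurableSet_stabAt (V : Finset (Site d)) (k : ℕ) :
    MeasurableSet {η : Config d | stabAt η V k} := by
  have : {η : Config d | stabAt η V k}
      = ⋂ x ∈ V, {η : Config d | heightZ η (uIter η V k) x < 2 * (d : ℤ)} := by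
    ext η; simp [stabAt]
  rw [this]
  apply Set.Finite.measurableSet_biInter V.finite_toSet
  intro x _
  exact (measurable_heightZ V (fun z => measurable_uIter V k z) x)
    (show MeasurableSet {z : ℤ | z < 2 * (d:ℤ)} from trivial)

theorem measurable_uV (hd : 1 ≤ d) (V : Finset (Site d)) (x : Site d) :
    Measurable fun η => uV η V x := by
  apply measurable_to_countable'
  intro m
  have : (fun η => uV η V x) ⁻¹' {m}
      = ⋃ k, ({η : Config d | stabAt η V k} ∩ {η | uIter η V k x = m}) := by
    ext η
    simp only [Set.mem_preimage, Set.mem_singleton_iff, Set.mem_iUnion, Set.mem_inter_iff,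
      Set.mem_setOf_eq]
    constructor
    · intro h
      exact ⟨Bnd η V + 1, stabAt_bnd η V hd, h⟩
    · rintro ⟨k, hk, hm⟩
      rw [show uV η V = uIter η V k from uIter_eq_of_stabAt_two (stabAt_bnd η V hd) hk] at *
      exact hm
  rw [this]
  exact MeasurableSet.iUnion fun k => (measurableSet_stabAt V k).inter
    ((measurable_uIter V k x) (show MeasurableSet {m} from trivial))

theorem measurable_uInf (hd : 1 ≤ d) (x : Site d) : Measurable fun η => uInf η x :=
  Measurable.iSup fun n => (measurable_from_top (f := fun n : ℕ => (n : ℝ≥0∞))).comp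
    (measurable_uV hd (box d n) x)

theorem measurable_shiftConfig (v : Site d) : Measurable (shiftConfig v (d := d)) :=
  measurable_pi_lambda _ fun x => measurable_pi_apply (x + v)

/-- lintegral invariance under shifts. -/
theorem lintegral_shift {μ : Measure (Config d)} (hinv : TransInvariant μ) (v : Site d)
    {f : Config d → ℝ≥0∞} (hf : Measurable f) :
    ∫⁻ η, f (shiftConfig v η) ∂μ = ∫⁻ η, f η ∂μ := by
  conv_rhs => rw [← hinv v]
  rw [lintegral_map hf (measurable_shiftConfig v)]

/-! ### the stable configuration in finite volume, mass bound -/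

/-- the stabilized finite-volume configuration (ℕ-valued). -/
noncomputable def SVn (η : Config d) (V : Finset (Site d)) (y : Site d) : ℕ :=
  (heightZ η (uV η V) y).toNat

theorem SVn_cast (η : Config d) (V : Finset (Site d)) (y : Site d) :
    ((SVn η V y : ℕ) : ℤ) = heightZ η (uV η V) y :=
  Int.toNat_of_nonneg (uV_height_nonneg η V y)

theorem SVn_le (hd : 1 ≤ d) (η : Config d) {V : Finset (Site d)} {y : Site d} (hy : y ∈ V) :
    SVn η V y ≤ 2 * d - 1 := by
  have h1 := uV_stab η V hd y hy
  have h2 := SVn_cast η V y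
  have hd1 : (1:ℕ) ≤ 2 * d := by omega
  omega

theorem measurable_SVn (hd : 1 ≤ d) (V : Finset (Site d)) (y : Site d) :
    Measurable fun η => SVn η V y := by
  unfold SVn
  exact (measurable_from_top (f := Int.toNat)).comp
    (measurable_heightZ V (fun z => measurable_uV hd V z) y)

theorem SVn_conserve (η : Config d) (V : Finset (Site d)) (y : Site d) :
    η y + nbrSum (uV η V) y = SVn η V y + 2 * d * uV η V y :=
  heightZ_toNat_eq η (uV η V) y (uV_height_nonneg η V y)

theorem update_eq_add_single (y : Site d) (i : Fin d) (s : ℤ) :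
    Function.update y i (y i + s) = y + Pi.single i s := by
  funext j
  rcases eq_or_ne j i with rfl | hj
  · simp
  · simp [Function.update_of_ne hj, Pi.single_eq_of_ne hj]

theorem sum_translate_le (u : Site d → ℕ) (V : Finset (Site d))
    (hsupp : ∀ x, x ∉ V → u x = 0) (w : Site d) :
    ∑ y ∈ V, u (y + w) ≤ ∑ z ∈ V, u z := by
  have h1 : ∑ y ∈ V, u (y + w) = ∑ z ∈ V.image (· + w), u z := by
    rw [Finset.sum_image]
    intro a _ b _ h
    have := congrArg (· - w) h
    simpa using this
  rw [h1]
  have h2 : ∑ z ∈ V.image (· + w), u z = ∑ z ∈ (V.image (· + w)) ∩ V, u z := by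
    symm
    apply Finset.sum_subset (Finset.inter_subset_left)
    intro x _ hx2
    apply hsupp
    intro hxV
    exact hx2 (Finset.mem_inter.mpr ⟨‹x ∈ V.image (· + w)›, hxV⟩)
  rw [h2]
  exact Finset.sum_le_sum_of_subset Finset.inter_subset_right

theorem sum_nbrSum_le (u : Site d → ℕ) (V : Finset (Site d))
    (hsupp : ∀ x, x ∉ V → u x = 0) :
    ∑ y ∈ V, nbrSum u y ≤ 2 * d * ∑ y ∈ V, u y := by
  unfold nbrSum
  rw [Finset.sum_comm]
  have hb : ∀ i : Fin d, ∑ y ∈ V, (u (Function.update y i (y i + 1))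
      + u (Function.update y i (y i - 1))) ≤ 2 * ∑ z ∈ V, u z := by
    intro i
    rw [Finset.sum_add_distrib]
    have e1 : ∑ y ∈ V, u (Function.update y i (y i + 1)) = ∑ y ∈ V, u (y + Pi.single i 1) :=
      Finset.sum_congr rfl fun y _ => by rw [update_eq_add_single]
    have e2 : ∑ y ∈ V, u (Function.update y i (y i - 1)) = ∑ y ∈ V, u (y + Pi.single i (-1)) :=
      Finset.sum_congr rfl fun y _ => by
        rw [show y i - 1 = y i + (-1) from by ring, update_eq_add_single]
    rw [e1, e2]
    have h4 := sum_translate_le u V hsupp (Pi.single i 1)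
    have h5 := sum_translate_le u V hsupp (Pi.single i (-1))
    calc ∑ y ∈ V, u (y + Pi.single i 1) + ∑ y ∈ V, u (y + Pi.single i (-1))
        ≤ ∑ z ∈ V, u z + ∑ z ∈ V, u z := add_le_add h4 h5
      _ = 2 * ∑ z ∈ V, u z := by ring
  calc ∑ i : Fin d, ∑ y ∈ V, (u (Function.update y i (y i + 1)) + u (Function.update y i (y i - 1)))
      ≤ ∑ _i : Fin d, 2 * ∑ z ∈ V, u z := Finset.sum_le_sum fun i _ => hb i
    _ = 2 * d * ∑ y ∈ V, u y := by
        rw [Finset.sum_const, Finset.card_univ, Fintype.card_fin]; ring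

/-- finite-volume mass can only decrease. -/
theorem sum_SVn_le (η : Config d) (V : Finset (Site d)) :
    ∑ y ∈ V, SVn η V y ≤ ∑ y ∈ V, η y := by
  have h1 : ∑ y ∈ V, (η y + nbrSum (uV η V) y) = ∑ y ∈ V, (SVn η V y + 2 * d * uV η V y) :=
    Finset.sum_congr rfl fun y _ => SVn_conserve η V y
  rw [Finset.sum_add_distrib, Finset.sum_add_distrib] at h1
  have h2 : ∑ y ∈ V, nbrSum (uV η V) y ≤ 2 * d * ∑ y ∈ V, uV η V y :=
    sum_nbrSum_le (uV η V) V (fun x hx => uV_zero_off η V hx)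
  have h3 : ∑ y ∈ V, 2 * d * uV η V y = 2 * d * ∑ y ∈ V, uV η V y := by
    rw [Finset.mul_sum]
  omega

/-- covariance of the finite-volume stable configuration. -/
theorem SVn_shift (hd : 1 ≤ d) (η : Config d) (v : Site d) (V : Finset (Site d)) (x : Site d) :
    SVn (shiftConfig v η) V x = SVn η (trV v V) (x + v) := by
  unfold SVn
  rw [heightZ_shift]
  congr 1
  apply heightZ_congr
  · rw [uV_shift hd]; simp
  · intro i
    constructor <;> rw [uV_shift hd] <;> simp

/-! ### identification of the infinite-volume odometer -/

theorem good_exists (hd : 1 ≤ d) (η : Config d) (S : Config d → Site d → ℤ)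
    (h : ∃ P : TopplingProcedure d, P.Legal ∧ P.StabilizingFor η ∧
        ∀ y, S η y = P.finalConfig η y) :
    ∃ u : Site d → ℕ,
      (∀ x, uInf η x = (u x : ℝ≥0∞)) ∧
      (∀ x, ∃ n₀, ∀ n, n₀ ≤ n → uV η (box d n) x = u x) ∧
      (∀ x n, uV η (box d n) x ≤ u x) ∧
      (∀ y, heightZ η u y = S η y) ∧
      (∀ y, 0 ≤ S η y ∧ S η y ≤ 2 * (d : ℤ) - 1) := by
  obtain ⟨P, hL, ⟨hFin, hStab⟩, hSeq⟩ := h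
  set τ : Site d → ℕ := fun x => P.Tinf η x with hτ
  have hτheight : ∀ z, heightZ η τ z = P.finalConfig η z := fun z => rfl
  have hτs : ∀ z, heightZ η τ z ≤ 2 * (d : ℤ) - 1 := by
    intro z; rw [hτheight]; exact (hStab z).2
  have hUb : ∀ n x, uV η (box d n) x ≤ τ x := fun n x =>
    uV_le η (box d n) (fun z _ => hτs z) x
  set u : Site d → ℕ := fun x => ⨆ n : ℕ, uV η (box d n) x with hu
  have hbdd : ∀ x, BddAbove (Set.range fun n : ℕ => uV η (box d n) x) := fun x =>
    ⟨τ x, by rintro a ⟨n, rfl⟩; exact hUb n x⟩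
  have hux : ∀ x n, uV η (box d n) x ≤ u x := fun x n =>
    le_ciSup (hbdd x) n
  have huτ : ∀ x, u x ≤ τ x := fun x => ciSup_le fun n => hUb n x
  have hatt : ∀ x, ∃ n₀, uV η (box d n₀) x = u x := by
    intro x
    have : u x ∈ Set.range fun n : ℕ => uV η (box d n) x :=
      Nat.sSup_mem (Set.range_nonempty _) (hbdd x)
    obtain ⟨n₀, hn₀⟩ := this
    exact ⟨n₀, hn₀⟩
  have hattm : ∀ x, ∃ n₀, ∀ n, n₀ ≤ n → uV η (box d n) x = u x := by
    intro x
    obtain ⟨n₀, hn₀⟩ := hatt x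
    refine ⟨n₀, fun n hn => le_antisymm (hux x n) ?_⟩
    rw [← hn₀]
    exact uV_mono_V η hd (box_mono hn) x
  -- stability of u
  have hustab : ∀ y, 0 ≤ heightZ η u y ∧ heightZ η u y ≤ 2 * (d : ℤ) - 1 := by
    intro y
    obtain ⟨ny, hny⟩ := hattm y
    have hnbr : ∀ i : Fin d, ∃ m, ∀ n, m ≤ n →
        uV η (box d n) (Function.update y i (y i + 1)) = u (Function.update y i (y i + 1)) ∧
        uV η (box d n) (Function.update y i (y i - 1)) = u (Function.update y i (y i - 1)) := by
      intro i
      obtain ⟨m1, hm1⟩ := hattm (Function.update y i (y i + 1))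
      obtain ⟨m2, hm2⟩ := hattm (Function.update y i (y i - 1))
      exact ⟨max m1 m2, fun n hn => ⟨hm1 n (le_trans (le_max_left _ _) hn),
        hm2 n (le_trans (le_max_right _ _) hn)⟩⟩
    choose m hm using hnbr
    set N : ℕ := max (max ny (vBnd y)) (Finset.univ.sup m) with hN
    have hyN : y ∈ box d N := by
      rw [mem_box]
      intro i
      have : (y i).natAbs ≤ vBnd y := Finset.le_sup (f := fun i => (y i).natAbs) (Finset.mem_univ i)
      omega
    have heq : heightZ η u y = heightZ η (uV η (box d N)) y := by
      apply heightZ_congr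
      · exact (hny N (by omega)).symm
      · intro i
        have hmN : m i ≤ N := le_trans (Finset.le_sup (Finset.mem_univ i)) (le_max_right _ _)
        obtain ⟨e1, e2⟩ := hm i N hmN
        exact ⟨e1.symm, e2.symm⟩
    rw [heq]
    refine ⟨uV_height_nonneg η (box d N) y, ?_⟩
    have := uV_stab η (box d N) hd y hyN
    omega
  -- least action: τ ≤ u
  have hTle : ∀ x, τ x ≤ u x := by
    intro x
    apply csSup_le (Set.range_nonempty _)
    rintro a ⟨t, rfl⟩
    exact T_le_of_stable P hL η (fun z => (hustab z).2) t x
  have hueq : ∀ x, u x = τ x := fun x => le_antisymm (huτ x) (hTle x)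
  refine ⟨u, ?_, hattm, hux, ?_, ?_⟩
  · intro x
    apply le_antisymm
    · apply iSup_le
      intro n
      exact_mod_cast hux x n
    · obtain ⟨n₀, hn₀⟩ := hatt x
      calc ((u x : ℕ) : ℝ≥0∞) = ((uV η (box d n₀) x : ℕ) : ℝ≥0∞) := by rw [hn₀]
        _ ≤ ⨆ n : ℕ, ((uV η (box d n) x : ℕ) : ℝ≥0∞) :=
            le_iSup (fun n : ℕ => ((uV η (box d n) x : ℕ) : ℝ≥0∞)) n₀
  · intro y
    have : heightZ η u y = heightZ η τ y := by
      apply heightZ_congr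
      · exact hueq y
      · intro i
        exact ⟨by rw [hueq], by rw [hueq]⟩
    rw [this, hτheight, hSeq y]
  · intro y
    rw [hSeq y]
    exact ⟨(hStab y).1, (hStab y).2⟩

/-! ### the measure-theoretic argument -/

theorem nbrSum_const_nat (c : ℕ) (y : Site d) : nbrSum (fun _ => c) y = 2 * d * c := by
  unfold nbrSum
  rw [Finset.sum_const, Finset.card_univ, Fintype.card_fin, smul_eq_mul]
  ring

theorem cast_min_ennreal (a b : ℕ) : ((min a b : ℕ) : ℝ≥0∞) = min (a : ℝ≥0∞) b := by
  rcases le_total a b with h | h <;>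
    simp [min_eq_left, min_eq_right, h, (Nat.cast_le (α := ℝ≥0∞)).mpr h]

/-- the set of configurations for which `S` is a legal stabilization. -/
def goodSet (S : Config d → Site d → ℤ) : Set (Config d) :=
  {η | ∃ P : TopplingProcedure d, P.Legal ∧ P.StabilizingFor η ∧ ∀ y, S η y = P.finalConfig η y}

section MeasurePart

variable {μ : Measure (Config d)} {S : Config d → Site d → ℤ}

theorem key_nat (η : Config d) (u : Site d → ℕ)
    (hheight : ∀ y, heightZ η u y = S η y) (hbnd : 0 ≤ S η 0) (M : ℕ) :
    nbrSum (fun z => min (u z) M) 0 + (if u 0 < M then 1 else 0) * η 0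
      ≤ 2 * d * min (u 0) M + (if u 0 < M then 1 else 0) * (S η 0).toNat := by
  have star : η 0 + nbrSum u 0 = (S η 0).toNat + 2 * d * u 0 := by
    have h := heightZ_toNat_eq η u 0 (by rw [hheight 0]; exact hbnd)
    rw [hheight 0] at h
    exact h
  by_cases h : u 0 < M
  · simp only [if_pos h]
    have hmin0 : min (u 0) M = u 0 := min_eq_left (le_of_lt h)
    have hmono : nbrSum (fun z => min (u z) M) (0 : Site d) ≤ nbrSum u 0 :=
      nbrSum_mono (fun z => min_le_left _ _) 0
    rw [hmin0]
    omega
  · simp only [if_neg h]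
    have hminM : min (u 0) M = M := min_eq_right (by omega)
    have hle : nbrSum (fun z => min (u z) M) (0 : Site d) ≤ nbrSum (fun _ => M) (0 : Site d) :=
      nbrSum_mono (fun z => min_le_right _ _) 0
    have hconst := nbrSum_const_nat (d := d) M 0
    rw [hconst] at hle
    rw [hminM]
    omega

theorem key_ae (hd : 1 ≤ d) (hS : ∀ᵐ η ∂μ, η ∈ goodSet S) (M : ℕ) :
    ∀ᵐ η ∂μ, nbrSum (fun z => min (uInf η z) (M : ℝ≥0∞)) 0
        + (if uInf η 0 < (M : ℝ≥0∞) then 1 else 0) * (η 0 : ℝ≥0∞)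
      ≤ 2 * d * min (uInf η 0) (M : ℝ≥0∞)
        + (if uInf η 0 < (M : ℝ≥0∞) then 1 else 0) * ((S η 0).toNat : ℝ≥0∞) := by
  filter_upwards [hS] with η hη
  obtain ⟨u, hcast, _, _, hheight, hbnds⟩ := good_exists hd η S hη
  have hmin : ∀ z, min (uInf η z) (M : ℝ≥0∞) = ((min (u z) M : ℕ) : ℝ≥0∞) := by
    intro z; rw [hcast z, cast_min_ennreal]
  have hif : (if uInf η 0 < (M : ℝ≥0∞) then (1:ℝ≥0∞) else 0)
      = (((if u 0 < M then 1 else 0) : ℕ) : ℝ≥0∞) := by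
    rw [hcast 0]
    rcases lt_or_ge (u 0) M with h | h
    · rw [if_pos (by exact_mod_cast h), if_pos h]; simp
    · rw [if_neg (by exact_mod_cast not_lt.mpr h), if_neg (by omega)]; simp
  have hnb : nbrSum (fun z => min (uInf η z) (M : ℝ≥0∞)) (0 : Site d)
      = ((nbrSum (fun z => min (u z) M) (0 : Site d) : ℕ) : ℝ≥0∞) := by
    rw [nbrSum_natCast_ennreal]
    exact nbrSum_congr 0 fun i => ⟨hmin _, hmin _⟩
  rw [hnb, hif, hmin 0]
  have hkey := key_nat (S := S) η u hheight (hbnds 0).1 M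
  calc ((nbrSum (fun z => min (u z) M) (0 : Site d) : ℕ) : ℝ≥0∞)
        + ((if u 0 < M then 1 else 0 : ℕ) : ℝ≥0∞) * (η 0 : ℝ≥0∞)
      = (((nbrSum (fun z => min (u z) M) (0 : Site d)
          + (if u 0 < M then 1 else 0) * η 0 : ℕ)) : ℝ≥0∞) := by push_cast; ring
    _ ≤ ((2 * d * min (u 0) M + (if u 0 < M then 1 else 0) * (S η 0).toNat : ℕ) : ℝ≥0∞) := by
        exact_mod_cast hkey
    _ = 2 * d * ((min (u 0) M : ℕ) : ℝ≥0∞)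
        + ((if u 0 < M then 1 else 0 : ℕ) : ℝ≥0∞) * ((S η 0).toNat : ℝ≥0∞) := by
        push_cast; ring

theorem measurable_eta0 : Measurable fun η : Config d => (η 0 : ℝ≥0∞) :=
  (measurable_from_top (f := fun n : ℕ => (n : ℝ≥0∞))).comp (measurable_pi_apply 0)

theorem lint_min_shift [IsProbabilityMeasure μ] (hd : 1 ≤ d) (hinv : TransInvariant μ)
    (z : Site d) (M : ℕ) :
    ∫⁻ η, min (uInf η z) (M : ℝ≥0∞) ∂μ = ∫⁻ η, min (uInf η 0) (M : ℝ≥0∞) ∂μ := by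
  have he : ∀ η, min (uInf η z) (M : ℝ≥0∞) = min (uInf (shiftConfig z η) 0) (M : ℝ≥0∞) := by
    intro η; rw [uInf_shift hd, zero_add]
  simp only [he]
  exact lintegral_shift hinv z ((measurable_uInf hd 0).min measurable_const)

theorem lower_bound [IsProbabilityMeasure μ] (hd : 1 ≤ d) (hinv : TransInvariant μ)
    (hS : ∀ᵐ η ∂μ, η ∈ goodSet S) :
    ∫⁻ η, (η 0 : ℝ≥0∞) ∂μ ≤ ∫⁻ η, ((S η 0).toNat : ℝ≥0∞) ∂μ := by
  set A := ∫⁻ η, ((S η 0).toNat : ℝ≥0∞) ∂μ with hA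
  have hmeas_min : ∀ (M : ℕ) (z : Site d), Measurable fun η => min (uInf η z) (M : ℝ≥0∞) :=
    fun M z => (measurable_uInf hd z).min measurable_const
  have hmeas_s : ∀ M : ℕ, Measurable (fun η : Config d =>
      (if uInf η 0 < (M : ℝ≥0∞) then (1:ℝ≥0∞) else 0)) := fun M =>
    Measurable.ite (measurableSet_lt (measurable_uInf hd 0) measurable_const)
      measurable_const measurable_const
  have hM : ∀ M : ℕ,
      ∫⁻ η, (if uInf η 0 < (M : ℝ≥0∞) then (1:ℝ≥0∞) else 0) * (η 0 : ℝ≥0∞) ∂μ ≤ A := by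
    intro M
    set c := ∫⁻ η, min (uInf η 0) (M : ℝ≥0∞) ∂μ with hc
    have hcM : c ≤ (M : ℝ≥0∞) := by
      calc c ≤ ∫⁻ _, (M : ℝ≥0∞) ∂μ := lintegral_mono fun η => min_le_right _ _
        _ = M := by simp
    -- integral of the left-hand side
    have hLHS : ∫⁻ η, (nbrSum (fun z => min (uInf η z) (M : ℝ≥0∞)) 0
        + (if uInf η 0 < (M : ℝ≥0∞) then (1:ℝ≥0∞) else 0) * (η 0 : ℝ≥0∞)) ∂μ
        = 2 * d * c + ∫⁻ η, (if uInf η 0 < (M : ℝ≥0∞) then (1:ℝ≥0∞) else 0) * (η 0 : ℝ≥0∞) ∂μ := by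
      have hm1 : Measurable fun η => nbrSum (fun z => min (uInf η z) (M : ℝ≥0∞)) (0 : Site d) := by
        unfold nbrSum
        apply Finset.measurable_sum
        intro i _
        exact ((hmeas_min M _).add (hmeas_min M _))
      rw [lintegral_add_left hm1]
      congr 1
      unfold nbrSum
      beta_reduce
      rw [lintegral_finset_sum _ (fun i _ => (show Measurable fun η => min (uInf η (Function.update (0 : Site d) i ((0 : Site d) i + 1))) (M : ℝ≥0∞) + min (uInf η (Function.update (0 : Site d) i ((0 : Site d) i - 1))) (M : ℝ≥0∞) from (hmeas_min M _).add (hmeas_min M _)))]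
      have hz : ∀ z : Site d, ∫⁻ η, min (uInf η z) (M : ℝ≥0∞) ∂μ = c :=
        fun z => lint_min_shift hd hinv z M
      have hsum : ∀ i : Fin d,
          ∫⁻ η, (min (uInf η (Function.update (0 : Site d) i ((0 : Site d) i + 1))) (M : ℝ≥0∞)
            + min (uInf η (Function.update (0 : Site d) i ((0 : Site d) i - 1))) (M : ℝ≥0∞)) ∂μ
          = c + c := by
        intro i
        rw [lintegral_add_left (hmeas_min M _), hz, hz]
      rw [Finset.sum_congr rfl fun i _ => hsum i]
      rw [Finset.sum_const, Finset.card_univ, Fintype.card_fin]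
      rw [nsmul_eq_mul]
      push_cast
      ring
    have hRHS : ∫⁻ η, (2 * d * min (uInf η 0) (M : ℝ≥0∞)
        + (if uInf η 0 < (M : ℝ≥0∞) then (1:ℝ≥0∞) else 0) * ((S η 0).toNat : ℝ≥0∞)) ∂μ
        = 2 * d * c + ∫⁻ η, (if uInf η 0 < (M : ℝ≥0∞) then (1:ℝ≥0∞) else 0) * ((S η 0).toNat : ℝ≥0∞) ∂μ := by
      rw [lintegral_add_left (((hmeas_min M 0).const_mul _))]
      congr 1
      rw [lintegral_const_mul _ (hmeas_min M 0)]
    have hmono := lintegral_mono_ae (key_ae hd hS M)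
    rw [hLHS, hRHS] at hmono
    have hfin : 2 * (d : ℝ≥0∞) * c ≠ ⊤ := by
      apply ENNReal.mul_ne_top
      · exact ENNReal.mul_ne_top (by simp) (by simp)
      · exact ne_top_of_le_ne_top (by simp) hcM
    have hba := (ENNReal.add_le_add_iff_left hfin).mp hmono
    calc ∫⁻ η, (if uInf η 0 < (M : ℝ≥0∞) then (1:ℝ≥0∞) else 0) * (η 0 : ℝ≥0∞) ∂μ
        ≤ ∫⁻ η, (if uInf η 0 < (M : ℝ≥0∞) then (1:ℝ≥0∞) else 0) * ((S η 0).toNat : ℝ≥0∞) ∂μ := hba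
      _ ≤ A := by
          apply lintegral_mono
          intro η
          calc (if uInf η 0 < (M : ℝ≥0∞) then (1:ℝ≥0∞) else 0) * ((S η 0).toNat : ℝ≥0∞)
              ≤ 1 * ((S η 0).toNat : ℝ≥0∞) := by
                apply mul_le_mul_left
                split <;> simp
            _ = ((S η 0).toNat : ℝ≥0∞) := one_mul _
  -- the supremum over M recovers ρ
  have hsup : ∫⁻ η, (η 0 : ℝ≥0∞) ∂μ
      = ⨆ M : ℕ, ∫⁻ η, (if uInf η 0 < (M : ℝ≥0∞) then (1:ℝ≥0∞) else 0) * (η 0 : ℝ≥0∞) ∂μ := by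
    rw [← lintegral_iSup]
    · apply lintegral_congr_ae
      filter_upwards [hS] with η hη
      obtain ⟨u, hcast, _, _, _, _⟩ := good_exists hd η S hη
      apply le_antisymm
      · apply le_trans (le_of_eq ?_) (le_iSup _ (u 0 + 1))
        rw [if_pos, one_mul]
        rw [hcast 0]
        exact_mod_cast Nat.lt_succ_self (u 0)
      · apply iSup_le
        intro M
        calc (if uInf η 0 < (M : ℝ≥0∞) then (1:ℝ≥0∞) else 0) * (η 0 : ℝ≥0∞)
            ≤ 1 * (η 0 : ℝ≥0∞) := by
              apply mul_le_mul_left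
              split <;> simp
          _ = (η 0 : ℝ≥0∞) := one_mul _
    · intro M
      exact (hmeas_s M).mul measurable_eta0
    · intro M M' hMM η
      dsimp only
      rcases lt_or_ge (uInf η 0) (M : ℝ≥0∞) with h | h
      · rw [if_pos h, if_pos (lt_of_lt_of_le h (by exact_mod_cast hMM))]
      · rw [if_neg (not_lt.mpr h)]
        simp
  rw [hsup]
  exact iSup_le hM

end MeasurePart

/-! ### the upper bound -/

theorem nbrSum_sub_int (f g : Site d → ℤ) (y : Site d) :
    nbrSum (fun z => f z - g z) y = nbrSum f y - nbrSum g y := by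
  unfold nbrSum
  rw [← Finset.sum_sub_distrib]
  exact Finset.sum_congr rfl fun i _ => (add_sub_add_comm _ _ _ _).symm

theorem trV_trV (v w : Site d) (B : Finset (Site d)) : trV v (trV w B) = trV (w + v) B := by
  unfold trV
  rw [Finset.image_image]
  apply Finset.image_congr
  intro x _
  simp [Function.comp]
  abel

theorem trV_cancel (y : Site d) (B : Finset (Site d)) : trV y (trV (-y) B) = B := by
  rw [trV_trV]
  simp only [neg_add_cancel]
  unfold trV
  ext z
  rw [Finset.mem_image]
  constructor
  · rintro ⟨a, ha, rfl⟩; simpa using ha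
  · intro h; exact ⟨z, h, by simp⟩

section UpperPart

variable {μ : Measure (Config d)} {S : Config d → Site d → ℤ}

/-- the tail-difference field. -/
noncomputable def Dk (k : ℕ) (η : Config d) : ℝ≥0∞ :=
  2 * d * ((uInf η 0 - (uV η (box d k) 0 : ℝ≥0∞))
    + nbrSum (fun z => uInf η z - (uV η (box d k) z : ℝ≥0∞)) 0)

noncomputable def gk (k : ℕ) (η : Config d) : ℝ≥0∞ :=
  min ((2 * d - 1 : ℕ) : ℝ≥0∞) (Dk k η)

theorem measurable_Dk (hd : 1 ≤ d) (k : ℕ) : Measurable (Dk (d := d) k) := by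
  unfold Dk
  apply Measurable.const_mul
  apply Measurable.add
  · exact (measurable_uInf hd 0).sub ((measurable_from_top
      (f := fun n : ℕ => (n : ℝ≥0∞))).comp (measurable_uV hd (box d k) 0))
  · unfold nbrSum
    apply Finset.measurable_sum
    intro i _
    apply Measurable.add <;>
      exact (measurable_uInf hd _).sub ((measurable_from_top
        (f := fun n : ℕ => (n : ℝ≥0∞))).comp (measurable_uV hd (box d k) _))

theorem measurable_gk (hd : 1 ≤ d) (k : ℕ) : Measurable (gk (d := d) k) :=
  measurable_const.min (measurable_Dk hd k)

theorem gk_antitone (hd : 1 ≤ d) : Antitone (gk (d := d)) := by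
  intro k k' hkk'
  intro η
  apply min_le_min le_rfl
  unfold Dk
  apply mul_le_mul_right
  apply add_le_add
  · apply tsub_le_tsub_left
    exact_mod_cast uV_mono_V η hd (box_mono hkk') 0
  · apply nbrSum_mono
    intro z
    apply tsub_le_tsub_left
    exact_mod_cast uV_mono_V η hd (box_mono hkk') z

theorem gk_le_const (k : ℕ) (η : Config d) : gk k η ≤ ((2 * d - 1 : ℕ) : ℝ≥0∞) :=
  min_le_left _ _

theorem eps_iInf_zero [IsProbabilityMeasure μ] (hd : 1 ≤ d)
    (hS : ∀ᵐ η ∂μ, η ∈ goodSet S) :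
    ⨅ k : ℕ, ∫⁻ η, gk k η ∂μ = 0 := by
  rw [← lintegral_iInf (fun k => measurable_gk hd k) (gk_antitone hd)]
  · have hae : ∀ᵐ η ∂μ, ⨅ k : ℕ, gk k η = 0 := by
      filter_upwards [hS] with η hη
      obtain ⟨u, hcast, hattm, _, _, _⟩ := good_exists hd η S hη
      -- find a uniform attainment index for 0 and its neighbours
      have hnbr : ∀ i : Fin d, ∃ m, ∀ n, m ≤ n →
          uV η (box d n) (Function.update (0 : Site d) i ((0 : Site d) i + 1))
            = u (Function.update (0 : Site d) i ((0 : Site d) i + 1)) ∧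
          uV η (box d n) (Function.update (0 : Site d) i ((0 : Site d) i - 1))
            = u (Function.update (0 : Site d) i ((0 : Site d) i - 1)) := by
        intro i
        obtain ⟨m1, hm1⟩ := hattm (Function.update (0 : Site d) i ((0 : Site d) i + 1))
        obtain ⟨m2, hm2⟩ := hattm (Function.update (0 : Site d) i ((0 : Site d) i - 1))
        exact ⟨max m1 m2, fun n hn => ⟨hm1 n (le_trans (le_max_left _ _) hn),
          hm2 n (le_trans (le_max_right _ _) hn)⟩⟩
      choose m hm using hnbr
      obtain ⟨n₀, hn₀⟩ := hattm 0
      set K : ℕ := max n₀ (Finset.univ.sup m) with hK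
      have hDK : Dk K η = 0 := by
        unfold Dk
        have h0 : uInf η 0 - (uV η (box d K) 0 : ℝ≥0∞) = 0 := by
          rw [hcast 0, hn₀ K (le_max_left _ _)]
          simp
        have hn : nbrSum (fun z => uInf η z - (uV η (box d K) z : ℝ≥0∞)) (0 : Site d) = 0 := by
          have : ∀ i : Fin d,
              (uInf η (Function.update (0 : Site d) i ((0 : Site d) i + 1))
                - (uV η (box d K) (Function.update (0 : Site d) i ((0 : Site d) i + 1)) : ℝ≥0∞)) = 0 ∧
              (uInf η (Function.update (0 : Site d) i ((0 : Site d) i - 1))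
                - (uV η (box d K) (Function.update (0 : Site d) i ((0 : Site d) i - 1)) : ℝ≥0∞)) = 0 := by
            intro i
            have hmK : m i ≤ K := le_trans (Finset.le_sup (Finset.mem_univ i)) (le_max_right _ _)
            obtain ⟨e1, e2⟩ := hm i K hmK
            constructor
            · rw [hcast _, e1]; simp
            · rw [hcast _, e2]; simp
          unfold nbrSum
          apply Finset.sum_eq_zero
          intro i _
          dsimp only
          rw [(this i).1, (this i).2, add_zero]
        rw [h0, hn]
        simp
      apply le_antisymm _ zero_le
      calc ⨅ k : ℕ, gk k η ≤ gk K η := iInf_le _ K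
        _ ≤ Dk K η := min_le_right _ _
        _ = 0 := hDK
    calc ∫⁻ η, ⨅ k : ℕ, gk k η ∂μ = ∫⁻ _, 0 ∂μ := lintegral_congr_ae hae
      _ = 0 := lintegral_zero
  · apply ne_top_of_le_ne_top (ENNReal.natCast_ne_top (2 * d - 1))
    calc ∫⁻ η, gk 0 η ∂μ ≤ ∫⁻ _, ((2 * d - 1 : ℕ) : ℝ≥0∞) ∂μ :=
        lintegral_mono fun η => gk_le_const 0 η
      _ = ((2 * d - 1 : ℕ) : ℝ≥0∞) := by simp

theorem key_upper_nat (hd : 1 ≤ d) (η : Config d) (u : Site d → ℕ)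
    (hheight : ∀ y, heightZ η u y = S η y)
    (hbnds : ∀ y, 0 ≤ S η y ∧ S η y ≤ 2 * (d : ℤ) - 1)
    {k : ℕ} {W : Finset (Site d)} (hkW : box d k ⊆ W) :
    (S η 0).toNat ≤ SVn η W 0
      + 2 * d * ((u 0 - uV η (box d k) 0)
        + nbrSum (fun z => u z - uV η (box d k) z) 0) := by
  have hWle : ∀ z, uV η W z ≤ u z := fun z =>
    uV_le η W (fun x _ => by rw [hheight x]; exact (hbnds x).2) z
  have hkle : ∀ z, uV η (box d k) z ≤ uV η W z := fun z => uV_mono_V η hd hkW z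
  have hkleu : ∀ z, uV η (box d k) z ≤ u z := fun z => le_trans (hkle z) (hWle z)
  -- ℤ-level estimate
  have hZ : S η 0 ≤ (SVn η W 0 : ℤ)
      + ((nbrSum (fun z => u z - uV η (box d k) z) (0 : Site d) : ℕ) : ℤ) := by
    rw [← hheight 0, SVn_cast η W 0]
    have hdiff : heightZ η u 0 - heightZ η (uV η W) 0
        = nbrSum (fun z => (u z : ℤ) - (uV η W z : ℤ)) 0
          - 2 * d * ((u 0 : ℤ) - (uV η W 0 : ℤ)) := by
      unfold heightZ
      rw [nbrSum_sub_int]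
      ring
    have hcnb : ((nbrSum (fun z => u z - uV η (box d k) z) (0 : Site d) : ℕ) : ℤ)
        = nbrSum (fun z => (u z : ℤ) - (uV η (box d k) z : ℤ)) 0 := by
      rw [nbrSum_natCast]
      apply nbrSum_congr
      intro i
      constructor <;> · rw [Nat.cast_sub (hkleu _)]
    have hmono2 : nbrSum (fun z => (u z : ℤ) - (uV η W z : ℤ)) (0 : Site d)
        ≤ nbrSum (fun z => (u z : ℤ) - (uV η (box d k) z : ℤ)) 0 := by
      apply nbrSum_mono
      intro z
      have h1 := hkle z
      have h2 := hWle z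
      omega
    have h1 : (0:ℤ) ≤ 2 * d * ((u 0 : ℤ) - (uV η W 0 : ℤ)) := by
      have h2 : (uV η W 0 : ℤ) ≤ (u 0 : ℤ) := by exact_mod_cast hWle 0
      have h3 : (0:ℤ) ≤ (d:ℤ) := Int.ofNat_nonneg d
      nlinarith
    rw [hcnb]
    omega
  -- transfer to ℕ
  have hfin : ((S η 0).toNat : ℤ) = S η 0 := Int.toNat_of_nonneg (hbnds 0).1
  have hb : (S η 0).toNat ≤ SVn η W 0
      + nbrSum (fun z => u z - uV η (box d k) z) (0 : Site d) := by
    omega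
  have hR : nbrSum (fun z => u z - uV η (box d k) z) (0 : Site d)
      ≤ 2 * d * ((u 0 - uV η (box d k) 0)
        + nbrSum (fun z => u z - uV η (box d k) z) 0) := by
    have h2d : 1 ≤ 2 * d := by omega
    nlinarith [Nat.zero_le (u 0 - uV η (box d k) 0),
      Nat.zero_le (nbrSum (fun z => u z - uV η (box d k) z) (0 : Site d))]
  omega

theorem key_upper_ae (hd : 1 ≤ d) (hS : ∀ᵐ η ∂μ, η ∈ goodSet S)
    {k : ℕ} {W : Finset (Site d)} (hkW : box d k ⊆ W) :
    ∀ᵐ η ∂μ, ((S η 0).toNat : ℝ≥0∞) ≤ (SVn η W 0 : ℝ≥0∞) + gk k η := by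
  filter_upwards [hS] with η hη
  obtain ⟨u, hcast, _, _, hheight, hbnds⟩ := good_exists hd η S hη
  rcases le_total ((2 * d - 1 : ℕ) : ℝ≥0∞) (Dk k η) with hcase | hcase
  · have hgk : gk k η = ((2 * d - 1 : ℕ) : ℝ≥0∞) := min_eq_left hcase
    rw [hgk]
    have hSb : (S η 0).toNat ≤ 2 * d - 1 := by
      have := (hbnds 0).1
      have := (hbnds 0).2
      omega
    calc ((S η 0).toNat : ℝ≥0∞) ≤ ((2 * d - 1 : ℕ) : ℝ≥0∞) := by exact_mod_cast hSb
      _ ≤ (SVn η W 0 : ℝ≥0∞) + ((2 * d - 1 : ℕ) : ℝ≥0∞) := le_add_self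
  · have hgk : gk k η = Dk k η := min_eq_right hcase
    rw [hgk]
    have hDk : Dk k η = ((2 * d * ((u 0 - uV η (box d k) 0)
        + nbrSum (fun z => u z - uV η (box d k) z) 0) : ℕ) : ℝ≥0∞) := by
      unfold Dk
      have hterm : ∀ z : Site d, uInf η z - (uV η (box d k) z : ℝ≥0∞)
          = ((u z - uV η (box d k) z : ℕ) : ℝ≥0∞) := by
        intro z
        rw [hcast z, ← ENNReal.natCast_sub]
      have hnb : nbrSum (fun z => uInf η z - (uV η (box d k) z : ℝ≥0∞)) (0 : Site d)
          = ((nbrSum (fun z => u z - uV η (box d k) z) (0 : Site d) : ℕ) : ℝ≥0∞) := by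
        rw [nbrSum_natCast_ennreal]
        exact nbrSum_congr 0 fun i => ⟨hterm _, hterm _⟩
      rw [hterm 0, hnb]
      push_cast
      ring
    rw [hDk]
    have := key_upper_nat (S := S) hd η u hheight hbnds hkW
    calc ((S η 0).toNat : ℝ≥0∞)
        ≤ ((SVn η W 0 + 2 * d * ((u 0 - uV η (box d k) 0)
          + nbrSum (fun z => u z - uV η (box d k) z) 0) : ℕ) : ℝ≥0∞) := by exact_mod_cast this
      _ = (SVn η W 0 : ℝ≥0∞) + ((2 * d * ((u 0 - uV η (box d k) 0)
          + nbrSum (fun z => u z - uV η (box d k) z) 0) : ℕ) : ℝ≥0∞) := by push_cast; ring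

theorem b_shift [IsProbabilityMeasure μ] (hd : 1 ≤ d) (hinv : TransInvariant μ)
    (n : ℕ) (y : Site d) :
    ∫⁻ η, (SVn η (box d n) y : ℝ≥0∞) ∂μ
      = ∫⁻ η, (SVn η (trV (-y) (box d n)) 0 : ℝ≥0∞) ∂μ := by
  have he : ∀ η, (SVn η (box d n) y : ℝ≥0∞)
      = (SVn (shiftConfig y η) (trV (-y) (box d n)) 0 : ℝ≥0∞) := by
    intro η
    rw [SVn_shift hd, trV_cancel, zero_add]
  simp only [he]
  exact lintegral_shift hinv y ((measurable_from_top (f := fun n : ℕ => (n : ℝ≥0∞))).comp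
    (measurable_SVn hd _ 0))

theorem lint_eta_shift [IsProbabilityMeasure μ] (hinv : TransInvariant μ) (y : Site d) :
    ∫⁻ η, (η y : ℝ≥0∞) ∂μ = ∫⁻ η, (η 0 : ℝ≥0∞) ∂μ := by
  have he : ∀ η : Config d, (η y : ℝ≥0∞) = ((shiftConfig y η) 0 : ℝ≥0∞) := by
    intro η
    unfold shiftConfig
    rw [zero_add]
  simp only [he]
  exact lintegral_shift hinv y measurable_eta0

theorem mass_int [IsProbabilityMeasure μ] (hd : 1 ≤ d) (hinv : TransInvariant μ) (n : ℕ) :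
    ∑ y ∈ box d n, ∫⁻ η, (SVn η (box d n) y : ℝ≥0∞) ∂μ
      ≤ ((box d n).card : ℝ≥0∞) * ∫⁻ η, (η 0 : ℝ≥0∞) ∂μ := by
  have h1 : ∑ y ∈ box d n, ∫⁻ η, (SVn η (box d n) y : ℝ≥0∞) ∂μ
      = ∫⁻ η, ∑ y ∈ box d n, (SVn η (box d n) y : ℝ≥0∞) ∂μ := by
    rw [lintegral_finset_sum]
    intro y _
    exact (measurable_from_top (f := fun n : ℕ => (n : ℝ≥0∞))).comp (measurable_SVn hd _ y)
  have h2 : ∫⁻ η, ∑ y ∈ box d n, (SVn η (box d n) y : ℝ≥0∞) ∂μ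
      ≤ ∫⁻ η, ∑ y ∈ box d n, (η y : ℝ≥0∞) ∂μ := by
    apply lintegral_mono
    intro η
    have := sum_SVn_le η (box d n)
    calc ∑ y ∈ box d n, (SVn η (box d n) y : ℝ≥0∞)
        = ((∑ y ∈ box d n, SVn η (box d n) y : ℕ) : ℝ≥0∞) := by push_cast; rfl
      _ ≤ ((∑ y ∈ box d n, η y : ℕ) : ℝ≥0∞) := by exact_mod_cast this
      _ = ∑ y ∈ box d n, (η y : ℝ≥0∞) := by push_cast; rfl
  have h3 : ∫⁻ η, ∑ y ∈ box d n, (η y : ℝ≥0∞) ∂μ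
      = ((box d n).card : ℝ≥0∞) * ∫⁻ η, (η 0 : ℝ≥0∞) ∂μ := by
    rw [lintegral_finset_sum]
    · rw [Finset.sum_congr rfl fun y _ => lint_eta_shift hinv y]
      rw [Finset.sum_const, nsmul_eq_mul]
    · intro y _
      exact (measurable_from_top (f := fun n : ℕ => (n : ℝ≥0∞))).comp (measurable_pi_apply y)
  calc _ = _ := h1
    _ ≤ _ := h2
    _ = _ := h3

theorem card_box (n : ℕ) : (box d n).card = (2 * n + 1) ^ d := by
  unfold box
  rw [Fintype.card_piFinset]
  rw [Finset.prod_const, Finset.card_univ, Fintype.card_fin]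
  congr 1
  rw [Int.card_Icc]
  omega

theorem box_sub_trV_box {k m : ℕ} {y : Site d} (hy : y ∈ box d m) :
    box d k ⊆ trV (-y) (box d (m + k)) := by
  intro z hz
  rw [mem_trV, mem_box]
  rw [mem_box] at hz hy
  intro i
  have h1 := hz i
  have h2 := hy i
  simp only [Pi.sub_apply, Pi.neg_apply, sub_neg_eq_add]
  omega

/-- the main inequality of the averaging argument. -/
theorem step_main [IsProbabilityMeasure μ] (hd : 1 ≤ d) (hinv : TransInvariant μ)
    (hS : ∀ᵐ η ∂μ, η ∈ goodSet S) (k m : ℕ) :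
    (((2 * m + 1) ^ d : ℕ) : ℝ≥0∞) * ∫⁻ η, ((S η 0).toNat : ℝ≥0∞) ∂μ
      ≤ (((2 * (m + k) + 1) ^ d : ℕ) : ℝ≥0∞) * ∫⁻ η, (η 0 : ℝ≥0∞) ∂μ
        + (((2 * m + 1) ^ d : ℕ) : ℝ≥0∞) * ∫⁻ η, gk k η ∂μ := by
  set A := ∫⁻ η, ((S η 0).toNat : ℝ≥0∞) ∂μ with hA
  set ε := ∫⁻ η, gk k η ∂μ with hε
  have hAb : ∀ y ∈ box d m, A ≤ ∫⁻ η, (SVn η (box d (m + k)) y : ℝ≥0∞) ∂μ + ε := by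
    intro y hy
    have hkW : box d k ⊆ trV (-y) (box d (m + k)) := box_sub_trV_box hy
    calc A ≤ ∫⁻ η, ((SVn η (trV (-y) (box d (m + k))) 0 : ℝ≥0∞) + gk k η) ∂μ :=
        lintegral_mono_ae (key_upper_ae hd hS hkW)
      _ = ∫⁻ η, (SVn η (trV (-y) (box d (m + k))) 0 : ℝ≥0∞) ∂μ + ε := by
          have hm : Measurable fun η : Config d =>
              ((SVn η (trV (-y) (box d (m + k))) 0 : ℕ) : ℝ≥0∞) :=
            (measurable_from_top (f := fun n : ℕ => (n : ℝ≥0∞))).comp (measurable_SVn hd _ 0)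
          rw [lintegral_add_left hm]
      _ = ∫⁻ η, (SVn η (box d (m + k)) y : ℝ≥0∞) ∂μ + ε := by
          rw [← b_shift hd hinv]
  calc (((2 * m + 1) ^ d : ℕ) : ℝ≥0∞) * A
      = ∑ _y ∈ box d m, A := by
        rw [Finset.sum_const, nsmul_eq_mul, card_box]
    _ ≤ ∑ y ∈ box d m, (∫⁻ η, (SVn η (box d (m + k)) y : ℝ≥0∞) ∂μ + ε) :=
        Finset.sum_le_sum hAb
    _ = ∑ y ∈ box d m, ∫⁻ η, (SVn η (box d (m + k)) y : ℝ≥0∞) ∂μ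
        + (((2 * m + 1) ^ d : ℕ) : ℝ≥0∞) * ε := by
        rw [Finset.sum_add_distrib, Finset.sum_const, nsmul_eq_mul, card_box]
    _ ≤ ∑ y ∈ box d (m + k), ∫⁻ η, (SVn η (box d (m + k)) y : ℝ≥0∞) ∂μ
        + (((2 * m + 1) ^ d : ℕ) : ℝ≥0∞) * ε := by
        apply add_le_add_left
        apply Finset.sum_le_sum_of_subset (box_mono (by omega))
    _ ≤ (((2 * (m + k) + 1) ^ d : ℕ) : ℝ≥0∞) * ∫⁻ η, (η 0 : ℝ≥0∞) ∂μ
        + (((2 * m + 1) ^ d : ℕ) : ℝ≥0∞) * ε := by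
        apply add_le_add_left
        have := mass_int (μ := μ) hd hinv (m + k)
        rwa [card_box] at this

end UpperPart

section Final

variable {μ : Measure (Config d)} {S : Config d → Site d → ℤ}

theorem A_le_const [IsProbabilityMeasure μ] (hd : 1 ≤ d) (hS : ∀ᵐ η ∂μ, η ∈ goodSet S) :
    ∫⁻ η, ((S η 0).toNat : ℝ≥0∞) ∂μ ≤ ((2 * d - 1 : ℕ) : ℝ≥0∞) := by
  have hae : ∀ᵐ η ∂μ, ((S η 0).toNat : ℝ≥0∞) ≤ ((2 * d - 1 : ℕ) : ℝ≥0∞) := by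
    filter_upwards [hS] with η hη
    obtain ⟨u, _, _, _, _, hbnds⟩ := good_exists hd η S hη
    have h1 := (hbnds 0).1
    have h2 := (hbnds 0).2
    have : (S η 0).toNat ≤ 2 * d - 1 := by omega
    exact_mod_cast this
  calc ∫⁻ η, ((S η 0).toNat : ℝ≥0∞) ∂μ ≤ ∫⁻ _, ((2 * d - 1 : ℕ) : ℝ≥0∞) ∂μ :=
      lintegral_mono_ae hae
    _ = ((2 * d - 1 : ℕ) : ℝ≥0∞) := by simp

theorem upper_bound [IsProbabilityMeasure μ] (hd : 1 ≤ d) (hinv : TransInvariant μ)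
    (hS : ∀ᵐ η ∂μ, η ∈ goodSet S) (hρ : ∫⁻ η, (η 0 : ℝ≥0∞) ∂μ ≠ ⊤) :
    ∫⁻ η, ((S η 0).toNat : ℝ≥0∞) ∂μ ≤ ∫⁻ η, (η 0 : ℝ≥0∞) ∂μ := by
  set ρE := ∫⁻ η, (η 0 : ℝ≥0∞) ∂μ with hρE
  set A := ∫⁻ η, ((S η 0).toNat : ℝ≥0∞) ∂μ with hA
  have hAfin : A ≠ ⊤ := ne_top_of_le_ne_top (ENNReal.natCast_ne_top (2 * d - 1))
    (A_le_const hd hS)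
  have hεfin : ∀ k : ℕ, ∫⁻ η, gk k η ∂μ ≠ ⊤ := by
    intro k
    apply ne_top_of_le_ne_top (ENNReal.natCast_ne_top (2 * d - 1))
    calc ∫⁻ η, gk k η ∂μ ≤ ∫⁻ _, ((2 * d - 1 : ℕ) : ℝ≥0∞) ∂μ :=
        lintegral_mono fun η => gk_le_const k η
      _ = ((2 * d - 1 : ℕ) : ℝ≥0∞) := by simp
  set a := A.toReal with ha
  set r := ρE.toReal with hr
  -- the real-valued inequality from `step_main`
  have hstep : ∀ k m : ℕ, (2 * (m:ℝ) + 1) ^ d * a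
      ≤ (2 * ((m:ℝ) + k) + 1) ^ d * r + (2 * (m:ℝ) + 1) ^ d * (∫⁻ η, gk k η ∂μ).toReal := by
    intro k m
    have h := step_main (μ := μ) hd hinv hS k m
    have hRfin : (((2 * (m + k) + 1) ^ d : ℕ) : ℝ≥0∞) * ρE
        + (((2 * m + 1) ^ d : ℕ) : ℝ≥0∞) * ∫⁻ η, gk k η ∂μ ≠ ⊤ := by
      apply ENNReal.add_ne_top.mpr
      constructor
      · exact ENNReal.mul_ne_top (ENNReal.natCast_ne_top _) hρ
      · exact ENNReal.mul_ne_top (ENNReal.natCast_ne_top _) (hεfin k)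
    have hle := ENNReal.toReal_mono hRfin h
    rw [ENNReal.toReal_add (ENNReal.mul_ne_top (ENNReal.natCast_ne_top _) hρ)
      (ENNReal.mul_ne_top (ENNReal.natCast_ne_top _) (hεfin k)),
      ENNReal.toReal_mul, ENNReal.toReal_mul, ENNReal.toReal_mul] at hle
    have hc1 : (((2 * m + 1) ^ d : ℕ) : ℝ≥0∞).toReal = (2 * (m:ℝ) + 1) ^ d := by
      rw [ENNReal.toReal_natCast]; push_cast; ring
    have hc2 : (((2 * (m + k) + 1) ^ d : ℕ) : ℝ≥0∞).toReal = (2 * ((m:ℝ) + k) + 1) ^ d := by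
      rw [ENNReal.toReal_natCast]; push_cast; ring
    rw [hc1, hc2] at hle
    exact hle
  have hak : ∀ k : ℕ, a ≤ r + (∫⁻ η, gk k η ∂μ).toReal := by
    intro k
    set e := (∫⁻ η, gk k η ∂μ).toReal with he
    have hineq : ∀ m : ℕ, a ≤ ((2 * ((m:ℝ) + k) + 1) / (2 * (m:ℝ) + 1)) ^ d * r + e := by
      intro m
      have hY : (0:ℝ) < (2 * (m:ℝ) + 1) ^ d := by positivity
      have hY0 : (2 * (m:ℝ) + 1) ≠ 0 := by positivity
      have h := hstep k m
      have h2 : a ≤ ((2 * ((m:ℝ) + k) + 1) ^ d * r + (2 * (m:ℝ) + 1) ^ d * e)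
          / (2 * (m:ℝ) + 1) ^ d := by
        rw [le_div_iff₀ hY]
        nlinarith [h]
      calc a ≤ _ := h2
        _ = ((2 * ((m:ℝ) + k) + 1) / (2 * (m:ℝ) + 1)) ^ d * r + e := by
            rw [div_pow]
            field_simp
    have hlim : Filter.Tendsto
        (fun m : ℕ => ((2 * ((m:ℝ) + k) + 1) / (2 * (m:ℝ) + 1)) ^ d * r + e)
        Filter.atTop (nhds (r + e)) := by
      have hq : Filter.Tendsto (fun m : ℕ => (2 * ((m:ℝ) + k) + 1) / (2 * (m:ℝ) + 1))
          Filter.atTop (nhds 1) := by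
        have heq : ∀ m : ℕ, (2 * ((m:ℝ) + k) + 1) / (2 * (m:ℝ) + 1)
            = 1 + 2 * (k:ℝ) / (2 * (m:ℝ) + 1) := by
          intro m
          have hY0 : (2 * (m:ℝ) + 1) ≠ 0 := by positivity
          field_simp
          ring
        have h0 : Filter.Tendsto (fun m : ℕ => 2 * (k:ℝ) / (2 * (m:ℝ) + 1))
            Filter.atTop (nhds 0) := by
          apply Filter.Tendsto.div_atTop tendsto_const_nhds
          apply Filter.tendsto_atTop_add_const_right
          apply Filter.Tendsto.const_mul_atTop (by norm_num : (0:ℝ) < 2)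
          exact tendsto_natCast_atTop_atTop
        have := tendsto_const_nhds (x := (1:ℝ)) (f := Filter.atTop (α := ℕ)) |>.add h0
        rw [add_zero] at this
        exact this.congr fun m => (heq m).symm
      have := ((hq.pow d).mul_const r).add_const e
      rw [one_pow, one_mul] at this
      exact this
    exact ge_of_tendsto' hlim hineq
  have har : a ≤ r := by
    apply le_of_forall_pos_le_add
    intro δ hδ
    have h0 := eps_iInf_zero (μ := μ) hd hS
    have hlt : ⨅ k : ℕ, ∫⁻ η, gk k η ∂μ < ENNReal.ofReal δ := by
      rw [h0]
      exact ENNReal.ofReal_pos.mpr hδ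
    obtain ⟨k, hk⟩ := iInf_lt_iff.mp hlt
    have hek : (∫⁻ η, gk k η ∂μ).toReal ≤ δ := by
      have := ENNReal.toReal_mono ENNReal.ofReal_ne_top (le_of_lt hk)
      rwa [ENNReal.toReal_ofReal hδ.le] at this
    linarith [hak k]
  exact (ENNReal.toReal_le_toReal hAfin hρ).mp har

end Final

end Sand


/-- Lemma 2.10 (first part): if `μ` is a translation invariant probability measure
with finite density `ρ = E_μ[η(0)]` and `μ` is stabilizable, then the expected height
is conserved by stabilization: `E_μ[η_∞(0)] = ρ`. -/
theorem statement4 (d : ℕ) (hd : 1 ≤ d) (μ : Measure (Config d))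
    [IsProbabilityMeasure μ] (hinv : TransInvariant μ) (ρ : ℝ≥0∞) (hρ : ρ < ⊤)
    (hmean : ∫⁻ η, ((η (0 : Site d) : ℝ≥0∞)) ∂μ = ρ)
    (hstab : ∀ᵐ η ∂μ, Stabilizable η)
    (S : Config d → Site d → ℤ)
    (hS : ∀ᵐ η ∂μ, ∃ P : TopplingProcedure d, P.Legal ∧ P.StabilizingFor η ∧
        ∀ y, S η y = P.finalConfig η y) :
    ∫⁻ η, (((S η (0 : Site d)).toNat : ℝ≥0∞)) ∂μ = ρ := by
  have hS' : ∀ᵐ η ∂μ, η ∈ Sand.goodSet S := hS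
  have h1 := Sand.lower_bound hd hinv hS'
  have h2 := Sand.upper_bound hd hinv hS' (by rw [hmean]; exact hρ.ne)
  rw [hmean] at h1 h2
  exact le_antisymm h2 h1
end

section
/- Let d ≥ 1 and let μ be a translation invariant probability measure on X with E_μ[η(0)] = ∞. Then μ is not stabilizable. -/
open MeasureTheory Filter Topology
open scoped ENNReal NNReal

namespace S5

variable {d : ℕ}

/-- parallel toppling odometer after `n` rounds -/
def odo (d : ℕ) : ℕ → Config d → Site d → ℕ
  | 0, _, _ => 0
  | n+1, η, x => odo d n η x +
      (if 2*(d:ℤ) ≤ (η x : ℤ) + nbrSum (fun y => (odo d n η y : ℤ)) x - 2*(d:ℤ)*(odo d n η x : ℤ)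
       then 1 else 0)

lemma nbrSum_natCast_int (f : Site d → ℕ) (y : Site d) :
    ((nbrSum f y : ℕ) : ℤ) = nbrSum (fun x => (f x : ℤ)) y := by
  unfold nbrSum; push_cast; rfl

lemma nbrSum_natCast_ennreal (f : Site d → ℕ) (y : Site d) :
    ((nbrSum f y : ℕ) : ℝ≥0∞) = nbrSum (fun x => (f x : ℝ≥0∞)) y := by
  unfold nbrSum; push_cast; rfl

lemma nbrSum_mono {f g : Site d → ℤ} (h : ∀ x, f x ≤ g x) (y : Site d) :
    nbrSum f y ≤ nbrSum g y := by
  unfold nbrSum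
  exact Finset.sum_le_sum fun i _ => add_le_add (h _) (h _)

lemma nbrSum_mono_nat {f g : Site d → ℕ} (h : ∀ x, f x ≤ g x) (y : Site d) :
    nbrSum f y ≤ nbrSum g y := by
  unfold nbrSum
  exact Finset.sum_le_sum fun i _ => add_le_add (h _) (h _)

lemma odo_mono (η : Config d) (x : Site d) : Monotone fun n => odo d n η x := by
  apply monotone_nat_of_le_succ
  intro n
  simp [odo]

lemma odo_le_bound {η : Config d} {v : Site d → ℕ}
    (hv : ∀ y, (η y : ℤ) + nbrSum (fun x => (v x : ℤ)) y - 2*(d:ℤ)*(v y : ℤ) ≤ 2*(d:ℤ) - 1) :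
    ∀ n x, odo d n η x ≤ v x := by
  intro n
  induction n with
  | zero => intro x; simp [odo]
  | succ n ih =>
    intro x
    rcases lt_or_eq_of_le (ih x) with hlt | heq
    · have : odo d (n+1) η x ≤ odo d n η x + 1 := by
        simp only [odo]; split <;> omega
      omega
    · have hcond : ¬ (2*(d:ℤ) ≤ (η x : ℤ) + nbrSum (fun y => (odo d n η y : ℤ)) x
          - 2*(d:ℤ)*(odo d n η x : ℤ)) := by
        intro hc
        have hm : nbrSum (fun y => (odo d n η y : ℤ)) x ≤ nbrSum (fun y => (v y : ℤ)) x :=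
          nbrSum_mono (fun y => by exact_mod_cast ih y) x
        have h1 := hv x
        rw [heq] at hc
        have h2 : ((odo d n η x : ℤ)) = (v x : ℤ) := by exact_mod_cast heq
        linarith
      have hstep : odo d (n+1) η x = odo d n η x := by
        simp only [odo, if_neg hcond, add_zero]
      rw [hstep, heq]

/-- the limit odometer, as a natural number -/
noncomputable def uN (η : Config d) (x : Site d) : ℕ := sSup (Set.range fun n => odo d n η x)

/-- the limit odometer, in `ℝ≥0∞` -/
noncomputable def uE (η : Config d) (x : Site d) : ℝ≥0∞ := ⨆ n, (odo d n η x : ℝ≥0∞)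

lemma exists_settle {η : Config d} {v : Site d → ℕ}
    (hv : ∀ y, (η y : ℤ) + nbrSum (fun x => (v x : ℤ)) y - 2*(d:ℤ)*(v y : ℤ) ≤ 2*(d:ℤ) - 1)
    (x : Site d) : ∃ N, ∀ n, N ≤ n → odo d n η x = uN η x := by
  have hbdd : BddAbove (Set.range fun n => odo d n η x) :=
    ⟨v x, by rintro _ ⟨n, rfl⟩; exact odo_le_bound hv n x⟩
  have hne : (Set.range fun n => odo d n η x).Nonempty := ⟨odo d 0 η x, ⟨0, rfl⟩⟩
  obtain ⟨N, hN⟩ := Nat.sSup_mem hne hbdd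
  have hN' : odo d N η x = uN η x := hN
  refine ⟨N, fun n hn => le_antisymm (le_csSup hbdd ⟨n, rfl⟩) ?_⟩
  rw [← hN']
  exact odo_mono η x hn

lemma odo_le_uN {η : Config d} {v : Site d → ℕ}
    (hv : ∀ y, (η y : ℤ) + nbrSum (fun x => (v x : ℤ)) y - 2*(d:ℤ)*(v y : ℤ) ≤ 2*(d:ℤ) - 1)
    (n : ℕ) (x : Site d) : odo d n η x ≤ uN η x :=
  le_csSup ⟨v x, by rintro _ ⟨m, rfl⟩; exact odo_le_bound hv m x⟩ ⟨n, rfl⟩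

lemma uE_eq_uN {η : Config d} {v : Site d → ℕ}
    (hv : ∀ y, (η y : ℤ) + nbrSum (fun x => (v x : ℤ)) y - 2*(d:ℤ)*(v y : ℤ) ≤ 2*(d:ℤ) - 1)
    (x : Site d) : uE η x = (uN η x : ℝ≥0∞) := by
  apply le_antisymm
  · exact iSup_le fun n => by exact_mod_cast odo_le_uN hv n x
  · obtain ⟨N, hN⟩ := exists_settle hv x
    rw [← hN N le_rfl]
    exact le_iSup (fun n => ((odo d n η x : ℕ) : ℝ≥0∞)) N

lemma limit_stable {η : Config d} {v : Site d → ℕ}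
    (hv : ∀ y, (η y : ℤ) + nbrSum (fun x => (v x : ℤ)) y - 2*(d:ℤ)*(v y : ℤ) ≤ 2*(d:ℤ) - 1)
    (x : Site d) :
    (η x : ℤ) + nbrSum (fun y => (uN η y : ℤ)) x - 2*(d:ℤ)*(uN η x : ℤ) ≤ 2*(d:ℤ) - 1 := by
  have hs : ∀ y : Site d, ∃ N, ∀ n, N ≤ n → odo d n η y = uN η y := exists_settle hv
  choose Nf hNf using hs
  set N1 := Finset.univ.sup fun i : Fin d => Nf (Function.update x i (x i + 1)) with hN1
  set N2 := Finset.univ.sup fun i : Fin d => Nf (Function.update x i (x i - 1)) with hN2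
  set N := max (Nf x) (max N1 N2) with hNdef
  have hxN : odo d N η x = uN η x := hNf x N (le_max_left _ _)
  have hxN1 : odo d (N+1) η x = uN η x := hNf x (N+1) (by omega)
  have hnb : nbrSum (fun y => (odo d N η y : ℤ)) x = nbrSum (fun y => (uN η y : ℤ)) x := by
    unfold nbrSum
    refine Finset.sum_congr rfl fun i _ => ?_
    have ha : Nf (Function.update x i (x i + 1)) ≤ N1 :=
      Finset.le_sup (f := fun i : Fin d => Nf (Function.update x i (x i + 1))) (Finset.mem_univ i)
    have hb : Nf (Function.update x i (x i - 1)) ≤ N2 :=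
      Finset.le_sup (f := fun i : Fin d => Nf (Function.update x i (x i - 1))) (Finset.mem_univ i)
    have h1 : Nf (Function.update x i (x i + 1)) ≤ N := by omega
    have h2 : Nf (Function.update x i (x i - 1)) ≤ N := by omega
    simp only [hNf _ N h1, hNf _ N h2]
  have hcond : ¬ (2*(d:ℤ) ≤ (η x : ℤ) + nbrSum (fun y => (odo d N η y : ℤ)) x
      - 2*(d:ℤ)*(odo d N η x : ℤ)) := by
    intro hc
    have : odo d (N+1) η x = odo d N η x + 1 := by
      simp only [odo, if_pos hc]
    omega
  rw [hnb, hxN] at hcond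
  omega

lemma odo_measurable : ∀ (n : ℕ) (x : Site d), Measurable fun η : Config d => odo d n η x := by
  intro n
  induction n with
  | zero => intro x; simp only [odo]; exact measurable_const
  | succ n ih =>
    intro x
    simp only [odo]
    apply Measurable.add (ih x)
    have he : Measurable fun η : Config d =>
        (η x : ℤ) + nbrSum (fun y => (odo d n η y : ℤ)) x - 2*(d:ℤ)*(odo d n η x : ℤ) := by
      apply Measurable.sub
      · apply Measurable.add
        · exact measurable_from_top.comp (measurable_pi_apply x)
        · unfold nbrSum
          apply Finset.measurable_sum
          intro i _
          exact Measurable.add (f := fun η : Config d => (odo d n η (Function.update x i (x i + 1)) : ℤ))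
            (g := fun η : Config d => (odo d n η (Function.update x i (x i - 1)) : ℤ))
            (measurable_from_top.comp (ih _)) (measurable_from_top.comp (ih _))
      · exact Measurable.const_mul (measurable_from_top.comp (ih x)) _
    have hset : MeasurableSet {η : Config d |
        2*(d:ℤ) ≤ (η x : ℤ) + nbrSum (fun y => (odo d n η y : ℤ)) x - 2*(d:ℤ)*(odo d n η x : ℤ)} :=
      he (MeasurableSet.of_discrete (s := Set.Ici (2*(d:ℤ))))
    exact Measurable.ite hset measurable_const measurable_const

lemma update_add_one (x v : Site d) (i : Fin d) :
    Function.update x i (x i + 1) + v = Function.update (x + v) i ((x + v) i + 1) := by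
  funext j
  rcases eq_or_ne j i with h | h
  · subst h
    simp [Pi.add_apply]
    ring
  · simp [Function.update_of_ne h, Pi.add_apply]

lemma update_sub_one (x v : Site d) (i : Fin d) :
    Function.update x i (x i - 1) + v = Function.update (x + v) i ((x + v) i - 1) := by
  funext j
  rcases eq_or_ne j i with h | h
  · subst h
    simp [Pi.add_apply]
    ring
  · simp [Function.update_of_ne h, Pi.add_apply]

lemma nbrSum_shift {M : Type*} [AddCommMonoid M] (f : Site d → M) (v y : Site d) :
    nbrSum (fun x => f (x + v)) y = nbrSum f (y + v) := by
  unfold nbrSum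
  refine Finset.sum_congr rfl fun i _ => ?_
  simp only [update_add_one y v i, update_sub_one y v i]

lemma odo_shift (v : Site d) (η : Config d) :
    ∀ (n : ℕ) (x : Site d), odo d n (shiftConfig v η) x = odo d n η (x + v) := by
  intro n
  induction n with
  | zero => intro x; rfl
  | succ n ih =>
    intro x
    simp only [odo, ih]
    congr 2
    rw [show nbrSum (fun y => (odo d n η (y+v) : ℤ)) x
        = nbrSum (fun z => (odo d n η z : ℤ)) (x + v) from
        nbrSum_shift (f := fun z => (odo d n η z : ℤ)) v x]
    rfl

/-- Existence of a stabilizing odometer bound, extracted from `Stabilizable`. -/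
lemma exists_bound {η : Config d} (h : Stabilizable η) :
    ∃ v : Site d → ℕ,
      ∀ y, (η y : ℤ) + nbrSum (fun x => (v x : ℤ)) y - 2*(d:ℤ)*(v y : ℤ) ≤ 2*(d:ℤ) - 1 := by
  obtain ⟨P, -, -, hstab⟩ := h
  exact ⟨P.Tinf η, fun y => (hstab y).2⟩

/-- Key deterministic inequality in `ℕ`. -/
lemma key_nat (hd : 1 ≤ d) {η : Config d} {v : Site d → ℕ}
    (hv : ∀ y, (η y : ℤ) + nbrSum (fun x => (v x : ℤ)) y - 2*(d:ℤ)*(v y : ℤ) ≤ 2*(d:ℤ) - 1)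
    (M : ℕ) :
    (if uN η 0 < M then η 0 else 0) + nbrSum (fun y => min (uN η y) M) 0
      ≤ (2*d - 1) + 2*d * min (uN η 0) M := by
  by_cases hlt : uN η 0 < M
  · rw [if_pos hlt, min_eq_left hlt.le]
    have hmono : nbrSum (fun y => min (uN η y) M) 0 ≤ nbrSum (fun y => uN η y) 0 :=
      nbrSum_mono_nat (fun y => min_le_left _ _) _
    have hs := limit_stable hv (0 : Site d)
    have hcast1 : ((nbrSum (fun y => min (uN η y) M) 0 : ℕ) : ℤ)
        ≤ nbrSum (fun y => (uN η y : ℤ)) 0 := by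
      rw [← nbrSum_natCast_int]
      exact_mod_cast hmono
    zify [show 1 ≤ 2*d by omega]
    linarith
  · rw [if_neg hlt, min_eq_right (le_of_not_gt hlt), zero_add]
    have h1 : nbrSum (fun y => min (uN η y) M) 0 ≤ nbrSum (fun _ : Site d => M) (0 : Site d) :=
      nbrSum_mono_nat (fun y => min_le_right _ _) _
    have h2 : nbrSum (fun _ : Site d => M) (0 : Site d) = d * (M + M) := by
      unfold nbrSum
      rw [Finset.sum_const, Finset.card_univ, Fintype.card_fin, smul_eq_mul]
    calc nbrSum (fun y => min (uN η y) M) 0 ≤ d * (M + M) := h2 ▸ h1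
      _ = 2*d*M := by ring
      _ ≤ (2*d - 1) + 2*d*M := Nat.le_add_left _ _

/-- Key inequality in `ℝ≥0∞`, with indicator. -/
lemma key_ennreal (hd : 1 ≤ d) {η : Config d}
    (h : ∃ v : Site d → ℕ,
      ∀ y, (η y : ℤ) + nbrSum (fun x => (v x : ℤ)) y - 2*(d:ℤ)*(v y : ℤ) ≤ 2*(d:ℤ) - 1)
    (M : ℕ) :
    Set.indicator {η' : Config d | uE η' 0 < (M:ℝ≥0∞)} (fun η' => ((η' 0 : ℕ) : ℝ≥0∞)) η
      + nbrSum (fun y => min (uE η y) (M:ℝ≥0∞)) 0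
      ≤ ((2*d - 1 : ℕ) : ℝ≥0∞) + 2*(d:ℝ≥0∞) * min (uE η 0) (M:ℝ≥0∞) := by
  obtain ⟨v, hv⟩ := h
  have hU := uE_eq_uN hv
  have hmin : ∀ y, min (uE η y) (M:ℝ≥0∞) = ((min (uN η y) M : ℕ) : ℝ≥0∞) := by
    intro y
    rw [hU y, Nat.mono_cast.map_min]
  have hC : (uE η 0 < (M:ℝ≥0∞)) ↔ uN η 0 < M := by
    rw [hU 0]
    exact_mod_cast Iff.rfl
  have hnbr : nbrSum (fun y => min (uE η y) (M:ℝ≥0∞)) 0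
      = ((nbrSum (fun y => min (uN η y) M) 0 : ℕ) : ℝ≥0∞) := by
    rw [nbrSum_natCast_ennreal]
    unfold nbrSum
    exact Finset.sum_congr rfl fun i _ => by simp only [hmin]
  rw [hnbr, hmin 0]
  have hkey := key_nat hd hv M
  by_cases hlt : uN η 0 < M
  · rw [Set.indicator_of_mem (by exact hC.mpr hlt)]
    rw [if_pos hlt] at hkey
    exact_mod_cast hkey
  · rw [Set.indicator_of_notMem (by exact fun hc => hlt (hC.mp hc))]
    rw [if_neg hlt, zero_add] at hkey
    rw [zero_add]
    calc ((nbrSum (fun y => min (uN η y) M) 0 : ℕ) : ℝ≥0∞)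
        ≤ (((2*d - 1) + 2*d * min (uN η 0) M : ℕ) : ℝ≥0∞) := by exact_mod_cast hkey
      _ = ((2*d - 1 : ℕ) : ℝ≥0∞) + 2*(d:ℝ≥0∞) * ((min (uN η 0) M : ℕ) : ℝ≥0∞) := by push_cast; ring

end S5

/-- Lemma 2.10 (second part): a translation invariant probability measure with
`E_μ[η(0)] = ∞` is not stabilizable. -/
theorem statement5 (d : ℕ) (hd : 1 ≤ d) (μ : Measure (Config d))
    [IsProbabilityMeasure μ] (hinv : TransInvariant μ)
    (hmean : ∫⁻ η, (η (0 : Site d) : ℝ≥0∞) ∂μ = ⊤) :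
    ¬ ∀ᵐ η ∂μ, Stabilizable η := by
  intro hae
  classical
  set g : Config d → ℝ≥0∞ := fun η => ((η 0 : ℕ) : ℝ≥0∞) with hgdef
  have hgm : Measurable g := measurable_from_top.comp (measurable_pi_apply 0)
  have huEm : ∀ x : Site d, Measurable fun η : Config d => S5.uE η x := fun x =>
    Measurable.iSup fun n => measurable_from_top.comp (S5.odo_measurable n x)
  have hWm : ∀ (M : ℕ) (x : Site d), Measurable fun η : Config d => min (S5.uE η x) (M:ℝ≥0∞) :=
    fun M x => (huEm x).min measurable_const
  have hshiftm : ∀ v : Site d, Measurable (shiftConfig (d := d) v) :=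
    fun v => measurable_pi_lambda _ fun x => measurable_pi_apply (x + v)
  have hAm : ∀ M : ℕ, MeasurableSet {η' : Config d | S5.uE η' 0 < (M:ℝ≥0∞)} :=
    fun M => measurableSet_lt (huEm 0) measurable_const
  -- translation invariance of the truncated odometer integrals
  have hWinv : ∀ (M : ℕ) (y : Site d),
      ∫⁻ η, min (S5.uE η y) (M:ℝ≥0∞) ∂μ = ∫⁻ η, min (S5.uE η 0) (M:ℝ≥0∞) ∂μ := by
    intro M y
    have hcomp : (fun η : Config d => min (S5.uE η y) (M:ℝ≥0∞))
        = fun η => min (S5.uE (shiftConfig y η) 0) (M:ℝ≥0∞) := by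
      funext η
      congr 1
      unfold S5.uE
      refine congrArg _ (funext fun n => ?_)
      rw [S5.odo_shift y η n 0, zero_add]
    calc ∫⁻ η, min (S5.uE η y) (M:ℝ≥0∞) ∂μ
        = ∫⁻ η, min (S5.uE (shiftConfig y η) 0) (M:ℝ≥0∞) ∂μ := by rw [hcomp]
      _ = ∫⁻ η, min (S5.uE η 0) (M:ℝ≥0∞) ∂(Measure.map (shiftConfig y) μ) :=
          (lintegral_map (hWm M 0) (hshiftm y)).symm
      _ = ∫⁻ η, min (S5.uE η 0) (M:ℝ≥0∞) ∂μ := by rw [hinv y]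
  -- the main bound for each truncation level M
  have hmain : ∀ M : ℕ,
      ∫⁻ η, Set.indicator {η' : Config d | S5.uE η' 0 < (M:ℝ≥0∞)} g η ∂μ
        ≤ ((2*d - 1 : ℕ) : ℝ≥0∞) := by
    intro M
    set I : ℝ≥0∞ := ∫⁻ η, min (S5.uE η 0) (M:ℝ≥0∞) ∂μ with hIdef
    have hI_le : I ≤ (M : ℝ≥0∞) := by
      calc I ≤ ∫⁻ _, (M:ℝ≥0∞) ∂μ := lintegral_mono fun η => min_le_right _ _
        _ = (M:ℝ≥0∞) := by rw [lintegral_const, measure_univ, mul_one]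
    have hpt : ∀ᵐ η ∂μ,
        Set.indicator {η' : Config d | S5.uE η' 0 < (M:ℝ≥0∞)} g η
          + nbrSum (fun y => min (S5.uE η y) (M:ℝ≥0∞)) 0
        ≤ ((2*d - 1 : ℕ) : ℝ≥0∞) + 2*(d:ℝ≥0∞) * min (S5.uE η 0) (M:ℝ≥0∞) := by
      filter_upwards [hae] with η hη
      exact S5.key_ennreal hd (S5.exists_bound hη) M
    have hle := lintegral_mono_ae hpt
    have hLHS : ∫⁻ η, (Set.indicator {η' : Config d | S5.uE η' 0 < (M:ℝ≥0∞)} g η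
          + nbrSum (fun y => min (S5.uE η y) (M:ℝ≥0∞)) 0) ∂μ
        = (∫⁻ η, Set.indicator {η' : Config d | S5.uE η' 0 < (M:ℝ≥0∞)} g η ∂μ)
          + 2*(d:ℝ≥0∞) * I := by
      rw [lintegral_add_left (hgm.indicator (hAm M))]
      congr 1
      have hsum : (fun η : Config d => nbrSum (fun y => min (S5.uE η y) (M:ℝ≥0∞)) 0)
          = fun η : Config d => ∑ i : Fin d,
            ((fun η' : Config d => min (S5.uE η' (Function.update (0 : Site d) i ((0 : Site d) i + 1))) (M:ℝ≥0∞)) η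
             + (fun η' : Config d => min (S5.uE η' (Function.update (0 : Site d) i ((0 : Site d) i - 1))) (M:ℝ≥0∞)) η) := rfl
      rw [hsum]
      rw [lintegral_finset_sum (f := fun i η => (fun η' : Config d => min (S5.uE η' (Function.update (0 : Site d) i ((0 : Site d) i + 1))) (M:ℝ≥0∞)) η
             + (fun η' : Config d => min (S5.uE η' (Function.update (0 : Site d) i ((0 : Site d) i - 1))) (M:ℝ≥0∞)) η) _ (fun i _ => Measurable.add (hWm M _) (hWm M _))]
      have : ∀ i : Fin d, (∫⁻ η, ((fun η' : Config d => min (S5.uE η' (Function.update (0 : Site d) i ((0 : Site d) i + 1))) (M:ℝ≥0∞)) η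
             + (fun η' : Config d => min (S5.uE η' (Function.update (0 : Site d) i ((0 : Site d) i - 1))) (M:ℝ≥0∞)) η) ∂μ) = I + I := by
        intro i
        rw [lintegral_add_left (hWm M _), hIdef]
        exact congrArg₂ (· + ·) (hWinv M _) (hWinv M _)
      rw [Finset.sum_congr rfl fun i _ => this i, Finset.sum_const, Finset.card_univ,
        Fintype.card_fin, nsmul_eq_mul]
      push_cast
      ring
    have hRHS : ∫⁻ η, (((2*d - 1 : ℕ) : ℝ≥0∞) + 2*(d:ℝ≥0∞) * min (S5.uE η 0) (M:ℝ≥0∞)) ∂μ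
        = ((2*d - 1 : ℕ) : ℝ≥0∞) + 2*(d:ℝ≥0∞) * I := by
      rw [lintegral_add_left measurable_const, lintegral_const, measure_univ, mul_one,
        lintegral_const_mul _ (hWm M 0)]
    rw [hLHS, hRHS] at hle
    have hne : 2*(d:ℝ≥0∞) * I ≠ ⊤ := by
      apply ENNReal.mul_ne_top
      · exact ENNReal.mul_ne_top (by simp) (ENNReal.natCast_ne_top d)
      · exact ne_top_of_le_ne_top (ENNReal.natCast_ne_top M) hI_le
    exact (ENNReal.add_le_add_iff_right hne).mp hle
  -- monotone convergence over M
  have hmono : Monotone fun M : ℕ =>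
      Set.indicator {η' : Config d | S5.uE η' 0 < (M:ℝ≥0∞)} g := by
    intro M M' hMM'
    apply Set.indicator_le_indicator_of_subset
    · intro η hη
      have hη' : S5.uE η 0 < (M:ℝ≥0∞) := hη
      show S5.uE η 0 < (M':ℝ≥0∞)
      exact lt_of_lt_of_le hη' (by exact_mod_cast hMM')
    · intro a
      exact zero_le
  have hsup : ∫⁻ η, (⨆ M : ℕ, Set.indicator {η' : Config d | S5.uE η' 0 < (M:ℝ≥0∞)} g η) ∂μ
      ≤ ((2*d - 1 : ℕ) : ℝ≥0∞) := by
    rw [lintegral_iSup (fun M => hgm.indicator (hAm M)) hmono]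
    exact iSup_le hmain
  have hae_eq : ∀ᵐ η ∂μ,
      (⨆ M : ℕ, Set.indicator {η' : Config d | S5.uE η' 0 < (M:ℝ≥0∞)} g η) = g η := by
    filter_upwards [hae] with η hη
    obtain ⟨v, hv⟩ := S5.exists_bound hη
    apply le_antisymm
    · exact iSup_le fun M => Set.indicator_le_self _ _ η
    · have hfin : S5.uE η 0 < ((S5.uN η 0 + 1 : ℕ) : ℝ≥0∞) := by
        rw [S5.uE_eq_uN hv 0]
        exact_mod_cast Nat.lt_succ_self _
      calc g η = Set.indicator {η' : Config d | S5.uE η' 0 < ((S5.uN η 0 + 1 : ℕ):ℝ≥0∞)} g η :=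
            (Set.indicator_of_mem
              (show η ∈ {η' : Config d | S5.uE η' 0 < ((S5.uN η 0 + 1 : ℕ):ℝ≥0∞)} from hfin)
              g).symm
        _ ≤ ⨆ M : ℕ, Set.indicator {η' : Config d | S5.uE η' 0 < (M:ℝ≥0∞)} g η :=
            le_iSup (fun M : ℕ => Set.indicator {η' : Config d | S5.uE η' 0 < (M:ℝ≥0∞)} g η)
              (S5.uN η 0 + 1)
  have : (⊤ : ℝ≥0∞) ≤ ((2*d - 1 : ℕ) : ℝ≥0∞) := by
    rw [← hmean]
    calc ∫⁻ η, ((η (0 : Site d) : ℕ) : ℝ≥0∞) ∂μ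
        = ∫⁻ η, (⨆ M : ℕ, Set.indicator {η' : Config d | S5.uE η' 0 < (M:ℝ≥0∞)} g η) ∂μ :=
          (lintegral_congr_ae hae_eq).symm
      _ ≤ ((2*d - 1 : ℕ) : ℝ≥0∞) := hsup
  exact ENNReal.natCast_ne_top (2*d - 1) (top_le_iff.mp this)
end
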